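/- arXiv:2604.08234 — 5 statements merged into one kernel-verified Lean document; each statement's English description precedes it below -/
import Mathlib

section
/- Let 𝓘 = (I_1,…,I_t) be a path of length t over Σ = [q], with I_i = {σ_{i−1}, σ_i} for distinct letters σ_0,…,σ_t ∈ Σ, and let L = Σ \ {σ_0,…,σ_t}. Let a_0,…,a_t, b ≥ 0 be integers with b + Σ_{i=0}^{t} a_i = n, and assume b = 0 or L ≠ ∅. Let A^{a_0,…,a_t,b} be the set of x ∈ Σ^n containing exactly a_i entries equal to σ_i for each 0 ≤ i ≤ t and exactly b entries from L, and let A_𝓘^{a_0,…,a_t,b} = { x_𝓘 : x ∈ A^{a_0,…,a_t,b} }. Then |A_𝓘^{a_0,…,a_t,b}| = ∏_{i=1}^{t} C(a_{i−1} + a_i, a_i). -/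
/-- The output of a single coloring channel `I`: the subsequence of `x`
consisting (in order) of the letters of `x` that belong to `I`. -/
def channelOutput {q : ℕ} (I : Finset (Fin q)) (x : List (Fin q)) : List (Fin q) :=
  x.filter (fun a => a ∈ I)

/-- The set `A_𝓘(n)` of all tuples of channel outputs over inputs of length `n`. -/
def channelOutputs {q : ℕ} {ι : Type} (𝓘 : ι → Finset (Fin q)) (n : ℕ) :
    Set (ι → List (Fin q)) :=
  { y | ∃ x : List (Fin q), x.length = n ∧ y = fun i => channelOutput (𝓘 i) x }

/-- The capacity of a sequence of coloring channels:
`limsup_{n→∞} (1/n) log_q |A_𝓘(n)|`. -/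
noncomputable def capacity {q : ℕ} {ι : Type} (𝓘 : ι → Finset (Fin q)) : ℝ :=
  Filter.atTop.limsup fun n : ℕ =>
    Real.logb q ((channelOutputs 𝓘 n).ncard : ℝ) / (n : ℝ)

/-- The binary entropy function (with `H(0) = H(1) = 0`). -/
noncomputable def binH (x : ℝ) : ℝ :=
  -(x * Real.logb 2 x) - (1 - x) * Real.logb 2 (1 - x)

open List
variable {α : Type*} [DecidableEq α]

def pmerge (u : α) : List α → List α → List α
  | [], x => x
  | c :: w, x =>
    if c = u then x.takeWhile (· ≠ u) ++ u :: pmerge u w ((x.dropWhile (· ≠ u)).tail)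
    else c :: pmerge u w x

lemma pmerge_nil (u : α) (x : List α) : pmerge u [] x = x := rfl

lemma pmerge_cons_self (u : α) (w x : List α) :
    pmerge u (u :: w) x
      = x.takeWhile (· ≠ u) ++ u :: pmerge u w ((x.dropWhile (· ≠ u)).tail) := by
  simp [pmerge]

lemma pmerge_cons_ne (u c : α) (hc : c ≠ u) (w x : List α) :
    pmerge u (c :: w) x = c :: pmerge u w x := by
  simp [pmerge, hc]

lemma reassemble {u : α} {x : List α} (h : u ∈ x) :
    x.takeWhile (· ≠ u) ++ u :: (x.dropWhile (· ≠ u)).tail = x := by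
  induction x with
  | nil => simp at h
  | cons c x ih =>
    by_cases hc : c = u
    · subst hc
      simp [List.takeWhile_cons, List.dropWhile_cons]
    · rcases List.mem_cons.1 h with h' | h'
      · exact absurd h'.symm hc
      · have h2 := ih h'
        simp only [ne_eq, decide_not] at h2 ⊢
        simp [List.takeWhile_cons, List.dropWhile_cons, hc, h2]

lemma count_takeWhile_ne (u : α) (x : List α) :
    (x.takeWhile (· ≠ u)).count u = 0 := by
  rw [List.count_eq_zero]
  intro h
  have := List.mem_takeWhile_imp h
  simp at this

lemma count_tail_dropWhile {u : α} {x : List α} (h : u ∈ x) :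
    ((x.dropWhile (· ≠ u)).tail).count u = x.count u - 1 := by
  have h2 := congrArg (List.count u) (reassemble h)
  rw [List.count_append, List.count_cons_self, count_takeWhile_ne] at h2
  omega

lemma mem_tail_dropWhile {u c : α} {x : List α} (h : c ∈ (x.dropWhile (· ≠ u)).tail) :
    c ∈ x :=
  ((List.tail_sublist _).trans (List.dropWhile_sublist _)).subset h

lemma pmerge_perm (u : α) (w x : List α) (hc : x.count u = w.count u) :
    List.Perm (pmerge u w x) (w.filter (· ≠ u) ++ x) := by
  induction w generalizing x with
  | nil => simp [pmerge_nil]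
  | cons c w ih =>
    by_cases hcu : c = u
    · subst hcu
      have hmem : c ∈ x := by
        rw [← List.count_pos_iff, hc]
        simp [List.count_cons]
      have hcnt : ((x.dropWhile (· ≠ c)).tail).count c = w.count c := by
        rw [count_tail_dropWhile hmem, hc, List.count_cons_self]
        omega
      have hperm := ih _ hcnt
      rw [pmerge_cons_self]
      refine List.Perm.trans (List.Perm.append_left _ (hperm.cons c)) ?_
      conv_rhs => rw [← reassemble hmem]
      rw [List.perm_iff_count]
      intro d
      simp only [List.count_append, List.count_cons]
      have : (c :: w).filter (· ≠ c) = w.filter (· ≠ c) := by simp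
      rw [this]
      ring
    · rw [pmerge_cons_ne u c hcu]
      have hc' : x.count u = w.count u := by
        rw [List.count_cons_of_ne hcu] at hc
        exact hc
      have hfil : (c :: w).filter (· ≠ u) = c :: w.filter (· ≠ u) := by simp [hcu]
      rw [hfil]
      exact (ih _ hc').cons c

lemma pmerge_count (u v : α) (w x : List α) (hc : x.count u = w.count u) :
    (pmerge u w x).count v = (w.filter (· ≠ u)).count v + x.count v := by
  rw [(pmerge_perm u w x hc).count_eq, List.count_append]

lemma pmerge_mem {u c : α} {w x : List α} (hc : x.count u = w.count u)
    (h : c ∈ pmerge u w x) : c ∈ w ∨ c ∈ x := by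
  rcases List.mem_append.1 ((pmerge_perm u w x hc).subset h) with h' | h'
  · exact Or.inl (List.mem_of_mem_filter h')
  · exact Or.inr h'

lemma pmerge_filter_other (p : α → Bool) {u : α} {w x : List α}
    (hw : ∀ c ∈ w, c ≠ u → p c = false) (hc : x.count u = w.count u) :
    (pmerge u w x).filter p = x.filter p := by
  induction w generalizing x with
  | nil => rw [pmerge_nil]
  | cons c w ih =>
    by_cases hcu : c = u
    · subst hcu
      have hmem : c ∈ x := by
        rw [← List.count_pos_iff, hc]; simp [List.count_cons]
      have hcnt : ((x.dropWhile (· ≠ c)).tail).count c = w.count c := by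
        rw [count_tail_dropWhile hmem, hc, List.count_cons_self]; omega
      rw [pmerge_cons_self, List.filter_append, List.filter_cons,
        ih (fun d hd hdu => hw d (List.mem_cons_of_mem _ hd) hdu) hcnt]
      conv_rhs => rw [← reassemble hmem]
      rw [List.filter_append, List.filter_cons]
    · rw [pmerge_cons_ne u c hcu, List.filter_cons_of_neg
        (by rw [hw c (List.mem_cons_self) hcu]; simp)]
      refine ih (fun d hd hdu => hw d (List.mem_cons_of_mem _ hd) hdu) ?_
      rwa [List.count_cons_of_ne hcu] at hc

lemma pmerge_filter_self (p : α → Bool) {u : α} {w x : List α}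
    (hpu : p u = true) (hw : ∀ c ∈ w, p c = true)
    (hx : ∀ c ∈ x, c ≠ u → p c = false) (hc : x.count u = w.count u) :
    (pmerge u w x).filter p = w := by
  induction w generalizing x with
  | nil =>
    rw [pmerge_nil, List.filter_eq_nil_iff]
    intro c hcx
    by_cases hcu : c = u
    · subst hcu
      exfalso
      have h1 := List.count_pos_iff.2 hcx
      simp at hc
      omega
    · simp [hx c hcx hcu]
  | cons c w ih =>
    by_cases hcu : c = u
    · subst hcu
      have hmem : c ∈ x := by
        rw [← List.count_pos_iff, hc]; simp [List.count_cons]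
      have hcnt : ((x.dropWhile (· ≠ c)).tail).count c = w.count c := by
        rw [count_tail_dropWhile hmem, hc, List.count_cons_self]; omega
      rw [pmerge_cons_self, List.filter_append, List.filter_cons_of_pos hpu]
      have h1 : (x.takeWhile (· ≠ c)).filter p = [] := by
        rw [List.filter_eq_nil_iff]
        intro d hd
        have hdx : d ∈ x := (List.takeWhile_sublist _).subset hd
        have hdu : d ≠ c := by
          have := List.mem_takeWhile_imp hd
          simpa using this
        simp [hx d hdx hdu]
      rw [h1, ih (fun d hd => hw d (List.mem_cons_of_mem _ hd))
        (fun d hd => hx d (mem_tail_dropWhile hd)) hcnt]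
      simp
    · rw [pmerge_cons_ne u c hcu, List.filter_cons_of_pos
        (hw c (List.mem_cons_self))]
      rw [ih (fun d hd => hw d (List.mem_cons_of_mem _ hd)) hx
        (by rwa [List.count_cons_of_ne hcu] at hc)]

lemma construct (t : ℕ) (σ : ℕ → α) (a : ℕ → ℕ) (w : ℕ → List α)
    (hinj : ∀ i ≤ t, ∀ j ≤ t, σ i = σ j → i = j)
    (hw : ∀ i < t, (∀ c ∈ w i, c = σ i ∨ c = σ (i + 1)) ∧
      (w i).count (σ i) = a i ∧ (w i).count (σ (i + 1)) = a (i + 1)) :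
    ∃ x : List α, (∀ c ∈ x, ∃ i ≤ t, c = σ i) ∧ (∀ i ≤ t, x.count (σ i) = a i) ∧
      (∀ i < t, x.filter (fun c => decide (c = σ i ∨ c = σ (i + 1))) = w i) := by
  induction t with
  | zero =>
    refine ⟨List.replicate (a 0) (σ 0), ?_, ?_, ?_⟩
    · intro c hc
      exact ⟨0, le_refl 0, List.eq_of_mem_replicate hc⟩
    · intro i hi
      interval_cases i
      simp
    · intro i hi; omega
  | succ t ih =>
    obtain ⟨x, hxmem, hxcount, hxfil⟩ :=
      ih (fun i hi j hj => hinj i (hi.trans (Nat.le_succ t)) j (hj.trans (Nat.le_succ t)))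
        (fun i hi => hw i (hi.trans (Nat.lt_succ_self t)))
    set u := σ t with hu
    set v := σ (t + 1) with hv
    obtain ⟨hWmem, hWcu, hWcv⟩ := hw t (Nat.lt_succ_self t)
    have huv : u ≠ v := fun h => by
      have := hinj t (Nat.le_succ t) (t + 1) (le_refl _) h; omega
    have hvx : v ∉ x := by
      intro hvmem
      obtain ⟨j, hj, hjv⟩ := hxmem v hvmem
      have := hinj (t + 1) (le_refl _) j (hj.trans (Nat.le_succ t)) hjv
      omega
    have hc : x.count u = (w t).count u := by
      rw [hxcount t (le_refl t), hWcu]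
    refine ⟨pmerge u (w t) x, ?_, ?_, ?_⟩
    · intro c hcm
      rcases pmerge_mem hc hcm with h' | h'
      · rcases hWmem c h' with h'' | h''
        · exact ⟨t, Nat.le_succ t, h''⟩
        · exact ⟨t + 1, le_refl _, h''⟩
      · obtain ⟨j, hj, hjc⟩ := hxmem c h'
        exact ⟨j, hj.trans (Nat.le_succ t), hjc⟩
    · intro i hi
      rw [pmerge_count u (σ i) (w t) x hc]
      rcases Nat.lt_succ_iff_lt_or_eq.1 (Nat.lt_succ_of_le hi) with hi' | hi'
      · have hiu : σ i ≠ v := fun h => by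
          have := hinj i hi (t + 1) (le_refl _) h; omega
        have h0 : ((w t).filter (· ≠ u)).count (σ i) = 0 := by
          rw [List.count_eq_zero]
          intro hmem
          have h1 := List.mem_of_mem_filter hmem
          have h2 := List.of_mem_filter hmem
          rcases hWmem _ h1 with h3 | h3
          · rw [h3] at h2; simp [hu] at h2
          · exact hiu h3
        rw [h0, hxcount i (Nat.lt_succ_iff.1 hi')]
        omega
      · subst hi'
        have h1 : ((w t).filter (· ≠ u)).count v = a (t + 1) := by
          rw [List.count_filter (by simp [huv.symm])]
          exact hWcv
        rw [h1, List.count_eq_zero.2 hvx]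
        omega
    · intro i hi
      rcases Nat.lt_succ_iff_lt_or_eq.1 hi with hi' | hi'
      · rw [pmerge_filter_other _ ?_ hc]
        · exact hxfil i hi'
        · intro c hcm hcu
          rcases hWmem c hcm with h' | h'
          · exact absurd h' hcu
          · subst h'
            have h2 : v ≠ σ i := fun h => by
              have := hinj (t + 1) (le_refl _) i (by omega) h; omega
            have h3 : v ≠ σ (i + 1) := fun h => by
              have := hinj (t + 1) (le_refl _) (i + 1) (by omega) h; omega
            simp only [hv] at h2 h3
            simp [h2, h3]
      · subst hi'
        rw [pmerge_filter_self _ (by simp [hu]) (fun c hcm => by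
            rcases hWmem c hcm with h' | h' <;> simp [h']) ?_ hc]
        intro c hcm hcu
        obtain ⟨j, hj, hjc⟩ := hxmem c hcm
        have h3 : c ≠ v := fun h => by
          rw [hjc] at h
          have := hinj j (by omega) _ (le_refl _) h
          omega
        simp only [hu] at hcu
        simp only [hv] at h3
        simp [hcu, h3]

lemma count_ofFn {n : ℕ} (f : Fin n → α) (a : α) :
    (List.ofFn f).count a = (Finset.univ.filter (fun j => f j = a)).card := by
  rw [List.ofFn_eq_map, List.count_eq_countP, List.countP_map, Fin.univ_def]
  simp only [Finset.filter, Finset.card, Multiset.filter_coe, Multiset.coe_card,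
    List.countP_eq_length_filter, Function.comp]
  congr 1

def wordFinset (u v : α) (A B : ℕ) : Finset (List α) :=
  ((Finset.univ : Finset (Fin (A + B))).powersetCard B).image
    (fun S => List.ofFn fun j => if j ∈ S then v else u)

lemma card_wordFinset (u v : α) (huv : u ≠ v) (A B : ℕ) :
    (wordFinset u v A B).card = (A + B).choose B := by
  rw [wordFinset, Finset.card_image_of_injective _ ?_, Finset.card_powersetCard,
    Finset.card_univ, Fintype.card_fin]
  intro S T h
  have h2 := List.ofFn_injective h
  ext j
  constructor <;> intro hj
  · by_contra hjT
    have := congrFun h2 j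
    simp [hj, hjT] at this
    exact huv this.symm
  · by_contra hjS
    have := congrFun h2 j
    simp [hj, hjS] at this
    exact huv this

lemma mem_wordFinset {u v : α} (huv : u ≠ v) {A B : ℕ} (w : List α) :
    w ∈ wordFinset u v A B ↔
      (∀ c ∈ w, c = u ∨ c = v) ∧ w.count u = A ∧ w.count v = B := by
  constructor
  · intro hw
    obtain ⟨S, hS, rfl⟩ := Finset.mem_image.1 hw
    have hScard : S.card = B := (Finset.mem_powersetCard.1 hS).2
    have hfv : (Finset.univ.filter (fun j => (if j ∈ S then v else u) = v)) = S := by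
      ext j
      by_cases hj : j ∈ S <;> simp [hj, huv]
    have hfu : (Finset.univ.filter (fun j => (if j ∈ S then v else u) = u)) = Sᶜ := by
      ext j
      by_cases hj : j ∈ S <;> simp [hj, huv.symm]
    refine ⟨?_, ?_, ?_⟩
    · intro c hc
      obtain ⟨j, hj⟩ := (List.mem_ofFn).1 hc
      by_cases h : j ∈ S
      · right; rw [← hj]; simp [h]
      · left; rw [← hj]; simp [h]
    · rw [count_ofFn, hfu, Finset.card_compl, hScard]
      simp only [Fintype.card_fin]
      omega
    · rw [count_ofFn, hfv, hScard]
  · rintro ⟨hmem, hcu, hcv⟩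
    have hlen : w.length = A + B := by
      have h0 := List.length_eq_countP_add_countP (· == u) (l := w)
      rw [← List.count_eq_countP] at h0
      have h1 : w.countP (fun a => ¬(a == u)) = w.count v := by
        rw [List.count_eq_countP]
        apply List.countP_congr
        intro c hc
        rcases hmem c hc with rfl | rfl
        · simp [huv]
        · simp [huv.symm]
      rw [h1, hcu, hcv] at h0
      exact h0
    set S : Finset (Fin (A + B)) :=
      Finset.univ.filter (fun j => w.get (Fin.cast hlen.symm j) = v) with hSdef
    have hof : (List.ofFn fun j => if j ∈ S then v else u) = w := by
      apply List.ext_getElem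
      · simp [hlen]
      · intro i h1 h2
        rw [List.getElem_ofFn]
        have hmemS : (⟨i, by simpa [hlen] using h1⟩ : Fin (A + B)) ∈ S ↔ w[i] = v := by
          simp [hSdef, List.get_eq_getElem, Fin.cast]
        by_cases hv : w[i] = v
        · rw [if_pos (hmemS.2 hv), hv]
        · rw [if_neg (fun h => hv (hmemS.1 h))]
          rcases hmem w[i] (List.getElem_mem h2) with h | h
          · exact h.symm
          · exact absurd h hv
    have hScard : S.card = B := by
      have hfv' : (Finset.univ.filter (fun j : Fin (A + B) =>
          (if j ∈ S then v else u) = v)) = S := by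
        ext j
        by_cases hj : j ∈ S <;> simp [hj, huv]
      have := count_ofFn (fun j : Fin (A + B) => if j ∈ S then v else u) v
      rw [hof, hcv, hfv'] at this
      exact this.symm
    exact Finset.mem_image.2 ⟨S, Finset.mem_powersetCard.2 ⟨Finset.subset_univ S, hScard⟩, hof⟩

theorem path_count' (q t n : ℕ) (hq : 2 ≤ q)
    (σ : Fin (t + 1) → Fin q) (hσ : Function.Injective σ)
    (𝓘 : Fin t → Finset (Fin q))
    (h𝓘 : ∀ i : Fin t, 𝓘 i = {σ i.castSucc, σ i.succ})
    (a : Fin (t + 1) → ℕ) (b : ℕ)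
    (hsum : b + ∑ i, a i = n)
    (hL : b = 0 ∨ (Finset.univ \ Finset.univ.image σ : Finset (Fin q)).Nonempty) :
    Set.ncard { y : Fin t → List (Fin q) | ∃ x : List (Fin q), x.length = n ∧
        (∀ i : Fin (t + 1), x.count (σ i) = a i) ∧
        x.countP (fun c => c ∈ Finset.univ \ Finset.univ.image σ) = b ∧
        y = fun i => List.filter (fun a => a ∈ 𝓘 i) x }
      = ∏ i : Fin t, Nat.choose (a i.castSucc + a i.succ) (a i.succ) := by
  have huv : ∀ i : Fin t, σ i.castSucc ≠ σ i.succ := fun i h =>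
    absurd (hσ h) (Fin.ne_of_lt (Fin.castSucc_lt_succ (i := i)))
  set WF : Fin t → Finset (List (Fin q)) := fun i =>
    wordFinset (σ i.castSucc) (σ i.succ) (a i.castSucc) (a i.succ) with hWF
  have hseteq : { y : Fin t → List (Fin q) | ∃ x : List (Fin q), x.length = n ∧
        (∀ i : Fin (t + 1), x.count (σ i) = a i) ∧
        x.countP (fun c => c ∈ Finset.univ \ Finset.univ.image σ) = b ∧
        y = fun i => List.filter (fun a => a ∈ 𝓘 i) x }
      = ↑(Fintype.piFinset WF) := by
    ext y
    simp only [Set.mem_setOf_eq, Finset.coe_sort_coe, Finset.mem_coe,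
      Fintype.mem_piFinset]
    constructor
    · rintro ⟨x, hxlen, hxcount, hxcountP, rfl⟩
      intro i
      rw [hWF, mem_wordFinset (huv i)]
      refine ⟨?_, ?_, ?_⟩
      · intro c hc
        have := List.of_mem_filter hc
        simpa [h𝓘 i] using this
      · rw [List.count_filter (by simp [h𝓘 i])]
        exact hxcount i.castSucc
      · rw [List.count_filter (by simp [h𝓘 i])]
        exact hxcount i.succ
    · intro hy
      have hyi := fun i => (mem_wordFinset (huv i) (y i)).1 (hy i)
      set σ' : ℕ → Fin q := fun m => if h : m < t + 1 then σ ⟨m, h⟩ else σ 0 with hσ'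
      set a' : ℕ → ℕ := fun m => if h : m < t + 1 then a ⟨m, h⟩ else 0 with ha'
      set w' : ℕ → List (Fin q) := fun m => if h : m < t then y ⟨m, h⟩ else [] with hw'
      have hσ'cast : ∀ i : Fin t, σ' i.val = σ i.castSucc ∧ σ' (i.val + 1) = σ i.succ := by
        intro i
        constructor
        · rw [hσ']
          simp only [dif_pos (Nat.lt_succ_of_lt i.isLt)]
          congr 1
        · rw [hσ']
          simp only [dif_pos (Nat.succ_lt_succ i.isLt)]
          congr 1
      obtain ⟨x0, hx0mem, hx0count, hx0fil⟩ := construct t σ' a' w'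
        (by
          intro i hi j hj h
          rw [hσ'] at h
          simp only [dif_pos (Nat.lt_succ_of_le hi), dif_pos (Nat.lt_succ_of_le hj)] at h
          have := hσ h
          exact Fin.mk.inj_iff.1 this)
        (by
          intro m hm
          obtain ⟨hmem, hcu, hcv⟩ := hyi ⟨m, hm⟩
          have h1 := hσ'cast ⟨m, hm⟩
          have hwm : w' m = y ⟨m, hm⟩ := by rw [hw']; simp [hm]
          have ha1 : a' m = a (⟨m, hm⟩ : Fin t).castSucc := by
            rw [ha']; simp only [dif_pos (Nat.lt_succ_of_lt hm)]; congr 1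
          have ha2 : a' (m + 1) = a (⟨m, hm⟩ : Fin t).succ := by
            rw [ha']; simp only [dif_pos (Nat.succ_lt_succ hm)]; congr 1
          rw [hwm, h1.1, h1.2, ha1, ha2]
          exact ⟨hmem, hcu, hcv⟩)
      obtain ⟨ℓ, hℓ⟩ : ∃ ℓ : Fin q, b = 0 ∨ ℓ ∈
          (Finset.univ \ Finset.univ.image σ : Finset (Fin q)) := by
        rcases hL with h | ⟨ℓ, hℓ⟩
        · exact ⟨σ 0, Or.inl h⟩
        · exact ⟨ℓ, Or.inr hℓ⟩
      have hℓ' : b ≠ 0 → ℓ ∉ Finset.univ.image σ := by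
        intro hb
        rcases hℓ with h | h
        · exact absurd h hb
        · exact (Finset.mem_sdiff.1 h).2
      refine ⟨x0 ++ List.replicate b ℓ, ?_, ?_, ?_, ?_⟩
      · -- length
        rw [List.length_append, List.length_replicate]
        have hlen0 : x0.length = ∑ i, a i := by
          have h1 : ∑ c ∈ x0.toFinset, x0.count c = x0.length := by
            have := Multiset.toFinset_sum_count_eq (↑x0 : Multiset (Fin q))
            simpa using this
          have hsub : x0.toFinset ⊆ Finset.univ.image σ := by
            intro c hc
            obtain ⟨i, hi, hic⟩ := hx0mem c (List.mem_toFinset.1 hc)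
            rw [Finset.mem_image]
            refine ⟨⟨i, Nat.lt_succ_of_le hi⟩, Finset.mem_univ _, ?_⟩
            rw [hic, hσ']
            simp only [dif_pos (Nat.lt_succ_of_le hi)]
          have h2 : ∑ c ∈ Finset.univ.image σ, x0.count c = x0.length := by
            rw [← h1]
            refine (Finset.sum_subset hsub ?_).symm
            intro c _ hc
            rw [List.count_eq_zero]
            intro hcx
            exact hc (List.mem_toFinset.2 hcx)
          rw [Finset.sum_image (fun i _ j _ h => hσ h)] at h2
          rw [← h2]
          refine Finset.sum_congr rfl ?_
          intro i _
          have := hx0count i.val (Nat.lt_succ_iff.1 i.isLt)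
          rw [hσ', ha'] at this
          simpa only [dif_pos i.isLt, Fin.eta] using this
        omega
      · -- counts
        intro i
        rw [List.count_append]
        have h1 : (List.replicate b ℓ).count (σ i) = 0 := by
          rcases Nat.eq_zero_or_pos b with hb | hb
          · simp [hb]
          · have hne : σ i ≠ ℓ := fun h =>
              hℓ' (by omega) (Finset.mem_image.2 ⟨i, Finset.mem_univ _, h⟩)
            simp [List.count_replicate, hne, Ne.symm hne]
        rw [h1]
        have := hx0count i.val (Nat.lt_succ_iff.1 i.isLt)
        rw [hσ', ha'] at this
        simpa only [dif_pos i.isLt, Fin.eta, add_zero] using this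
      · -- countP
        rw [List.countP_append]
        have h1 : x0.countP (fun c => c ∈ Finset.univ \ Finset.univ.image σ) = 0 := by
          rw [List.countP_eq_zero]
          intro c hc
          obtain ⟨i, hi, hic⟩ := hx0mem c hc
          simp only [Finset.mem_sdiff, Finset.mem_univ, true_and, decide_eq_true_eq,
            not_not]
          rw [hic, hσ']
          simp only [dif_pos (Nat.lt_succ_of_le hi)]
          exact Finset.mem_image.2 ⟨⟨i, Nat.lt_succ_of_le hi⟩, Finset.mem_univ _, rfl⟩
        have h2 : (List.replicate b ℓ).countP
            (fun c => c ∈ Finset.univ \ Finset.univ.image σ) = b := by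
          rcases Nat.eq_zero_or_pos b with hb | hb
          · simp [hb]
          · have hmem : ℓ ∈ Finset.univ \ Finset.univ.image σ := by
              rcases hℓ with h | h
              · omega
              · exact h
            have := List.countP_eq_length
              (p := fun c => decide (c ∈ Finset.univ \ Finset.univ.image σ))
              (l := List.replicate b ℓ)
            rw [this.2 ?_, List.length_replicate]
            intro c hc
            rw [List.eq_of_mem_replicate hc]
            simpa using hmem
        rw [h1, h2]
        omega
      · -- outputs
        funext i
        rw [List.filter_append]
        have h1 : (List.replicate b ℓ).filter (fun c => c ∈ 𝓘 i) = [] := by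
          rcases Nat.eq_zero_or_pos b with hb | hb
          · simp [hb]
          · rw [List.filter_eq_nil_iff]
            intro c hc
            have hcℓ : c = ℓ := List.eq_of_mem_replicate hc
            subst hcℓ
            have := hℓ' (by omega)
            simp only [h𝓘 i, Finset.mem_insert, Finset.mem_singleton, decide_eq_true_eq]
            push_neg
            constructor
            · intro h
              exact this (Finset.mem_image.2 ⟨i.castSucc, Finset.mem_univ _, h.symm⟩)
            · intro h
              exact this (Finset.mem_image.2 ⟨i.succ, Finset.mem_univ _, h.symm⟩)
        rw [h1, List.append_nil]
        have h2 := hx0fil i.val i.isLt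
        have h3 := hσ'cast i
        rw [h3.1, h3.2] at h2
        have h4 : w' i.val = y i := by rw [hw']; simp [i.isLt]
        rw [h4] at h2
        rw [← h2]
        apply List.filter_congr
        intro c _
        simp [h𝓘 i]
    done
  rw [hseteq, Set.ncard_coe_finset, Fintype.card_piFinset]
  refine Finset.prod_congr rfl ?_
  intro i _
  rw [hWF]
  exact card_wordFinset _ _ (huv i) _ _


/-- the exact count of output tuples of a path of coloring
channels over inputs with prescribed letter counts. -/
theorem path_count (q t n : ℕ) (hq : 2 ≤ q)
    (σ : Fin (t + 1) → Fin q) (hσ : Function.Injective σ)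
    (𝓘 : Fin t → Finset (Fin q))
    (h𝓘 : ∀ i : Fin t, 𝓘 i = {σ i.castSucc, σ i.succ})
    (a : Fin (t + 1) → ℕ) (b : ℕ)
    (hsum : b + ∑ i, a i = n)
    (hL : b = 0 ∨ (Finset.univ \ Finset.univ.image σ : Finset (Fin q)).Nonempty) :
    Set.ncard { y : Fin t → List (Fin q) | ∃ x : List (Fin q), x.length = n ∧
        (∀ i : Fin (t + 1), x.count (σ i) = a i) ∧
        x.countP (fun c => c ∈ Finset.univ \ Finset.univ.image σ) = b ∧
        y = fun i => channelOutput (𝓘 i) x }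
      = ∏ i : Fin t, Nat.choose (a i.castSucc + a i.succ) (a i.succ) :=
  path_count' q t n hq σ hσ 𝓘 h𝓘 a b hsum hL
end

section
/- Let 𝓘 = (I_1,…,I_t), t ≥ 2, be an irreducible sequence of coloring channels over Σ = [q], and let E_𝓘 (ordered arbitrarily) be the sequence of all 2-element coloring channels given by the edges of the pairs graph of 𝓘. Then |A_𝓘(n)| = |A_{E_𝓘}(n)| for all n, and consequently cap(𝓘) = cap(E_𝓘). -/
/-- Filtering by a subset can be done after filtering by a superset. -/
lemma filter_subset_eq {q : ℕ} (e I : Finset (Fin q)) (he : e ⊆ I) (x : List (Fin q)) :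
    x.filter (fun a => a ∈ e) = (x.filter (fun a => a ∈ I)).filter (fun a => a ∈ e) := by
  rw [List.filter_filter]
  apply List.filter_congr
  intro a _
  by_cases h : a ∈ e
  · simp [h, he h]
  · simp [h]

/-- A list with letters in `I` is determined by its pair projections and letter counts. -/
lemma pair_reconstruct {q : ℕ} (I : Finset (Fin q)) :
    ∀ (y z : List (Fin q)), (∀ a ∈ y, a ∈ I) → (∀ a ∈ z, a ∈ I) →
    (∀ u v : Fin q, u ∈ I → v ∈ I → u ≠ v →
      y.filter (fun a => a ∈ ({u, v} : Finset (Fin q))) =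
      z.filter (fun a => a ∈ ({u, v} : Finset (Fin q)))) →
    (∀ a ∈ I, y.count a = z.count a) → y = z := by
  intro y
  induction y with
  | nil =>
    intro z _ hz _ hcount
    cases z with
    | nil => rfl
    | cons b z' =>
      have hb := hz b (by simp)
      have := hcount b hb
      simp [List.count_cons] at this
  | cons u y' ih =>
    intro z hy hz hpair hcount
    have hu : u ∈ I := hy u (by simp)
    have hzpos : 0 < z.count u := by
      have := hcount u hu
      simp [List.count_cons] at this
      omega
    cases z with
    | nil => simp at hzpos
    | cons w z' =>
      have hw : w ∈ I := hz w (by simp)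
      by_cases huw : u = w
      · subst huw
        have hy' : ∀ a ∈ y', a ∈ I := fun a ha => hy a (by simp [ha])
        have hz' : ∀ a ∈ z', a ∈ I := fun a ha => hz a (by simp [ha])
        have hpair' : ∀ u₁ v₁ : Fin q, u₁ ∈ I → v₁ ∈ I → u₁ ≠ v₁ →
            y'.filter (fun a => a ∈ ({u₁, v₁} : Finset (Fin q))) =
            z'.filter (fun a => a ∈ ({u₁, v₁} : Finset (Fin q))) := by
          intro u₁ v₁ h1 h2 h3
          have h := hpair u₁ v₁ h1 h2 h3
          by_cases hc : u ∈ ({u₁, v₁} : Finset (Fin q))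
          · simp only [List.filter_cons] at h
            rw [if_pos (by simpa using hc), if_pos (by simpa using hc)] at h
            exact List.tail_eq_of_cons_eq h
          · simp only [List.filter_cons] at h
            rw [if_neg (by simpa using hc), if_neg (by simpa using hc)] at h
            exact h
        have hcount' : ∀ a ∈ I, y'.count a = z'.count a := by
          intro a ha
          have := hcount a ha
          simp [List.count_cons] at this
          omega
        rw [ih z' hy' hz' hpair' hcount']
      · exfalso
        have h := hpair u w hu hw huw
        have h1 : u ∈ ({u, w} : Finset (Fin q)) := by simp
        have h2 : w ∈ ({u, w} : Finset (Fin q)) := by simp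
        simp only [List.filter_cons] at h
        rw [if_pos (by simpa using h1), if_pos (by simpa using h2)] at h
        exact huw (List.head_eq_of_cons_eq h)

/-- Images of a set under two maps with the same kernel have the same ncard. -/
lemma ncard_image_ker {α β γ : Type*} [Nonempty α] (S : Set α) (f : α → β) (g : α → γ)
    (h : ∀ x x', f x = f x' ↔ g x = g x') : (f '' S).ncard = (g '' S).ncard := by
  classical
  obtain ⟨x₀⟩ := ‹Nonempty α›
  set ψ : β → γ := fun y => g (if hy : ∃ x, f x = y then hy.choose else x₀) with hψdef
  have hψ : ∀ x, ψ (f x) = g x := by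
    intro x
    have hy : ∃ c, f c = f x := ⟨x, rfl⟩
    simp only [hψdef, dif_pos hy]
    exact (h _ _).mp hy.choose_spec
  have himg : ψ '' (f '' S) = g '' S := by
    rw [Set.image_image]
    apply Set.image_congr
    intro x _
    exact hψ x
  have hinj : Set.InjOn ψ (f '' S) := by
    rintro y₁ ⟨x₁, _, rfl⟩ y₂ ⟨x₂, _, rfl⟩ hgy
    rw [hψ, hψ] at hgy
    exact (h _ _).mpr hgy
  rw [← himg, Set.ncard_image_of_injOn hinj]

/-- an irreducible sequence of coloring channels has the same
number of output tuples (hence the same capacity) as the sequence of 2-element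
channels given by the edges of its pairs graph. -/
theorem pairs_graph_capacity (q t : ℕ) (hq : 2 ≤ q) (ht : 2 ≤ t)
    (𝓘 : Fin t → Finset (Fin q)) (hne : ∀ i, (𝓘 i).Nonempty)
    (hsub : ∀ i j : Fin t, i ≠ j → ¬ 𝓘 i ⊆ 𝓘 j)
    (hnsep : ¬ ∃ S : Finset (Fin t), S.Nonempty ∧ S ≠ Finset.univ ∧
      (S.biUnion 𝓘) ∩ (Sᶜ.biUnion 𝓘) = ∅) :
    (∀ n : ℕ, (channelOutputs 𝓘 n).ncard =
      (channelOutputs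
        (fun e : {e : Finset (Fin q) // e.card = 2 ∧ ∃ i, e ⊆ 𝓘 i} => e.1) n).ncard) ∧
    capacity 𝓘 =
      capacity (fun e : {e : Finset (Fin q) // e.card = 2 ∧ ∃ i, e ⊆ 𝓘 i} => e.1) := by
  classical
  -- every letter appearing in some channel lies in an edge
  have edge_exists : ∀ (i : Fin t) (a : Fin q), a ∈ 𝓘 i →
      ∃ e : Finset (Fin q), e.card = 2 ∧ (∃ j, e ⊆ 𝓘 j) ∧ a ∈ e := by
    intro i a ha
    by_cases hb : ∃ j, ∃ b ∈ 𝓘 j, a ∈ 𝓘 j ∧ b ≠ a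
    · obtain ⟨j, b, hbj, haj, hba⟩ := hb
      refine ⟨{a, b}, ?_, ⟨j, ?_⟩, by simp⟩
      · exact Finset.card_pair (Ne.symm hba)
      · intro c hc
        simp only [Finset.mem_insert, Finset.mem_singleton] at hc
        rcases hc with rfl | rfl <;> assumption
    · push_neg at hb
      exfalso
      have hIa : ∀ j, a ∈ 𝓘 j → 𝓘 j = {a} := by
        intro j haj
        apply Finset.eq_singleton_iff_unique_mem.mpr
        exact ⟨haj, fun b hbj => hb j b hbj haj⟩
      have hIi : 𝓘 i = {a} := hIa i ha
      have honly : ∀ j, j ≠ i → a ∉ 𝓘 j := by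
        intro j hj haj
        exact hsub i j (Ne.symm hj) (by rw [hIi, hIa j haj])
      apply hnsep
      refine ⟨{i}, Finset.singleton_nonempty i, ?_, ?_⟩
      · intro hu
        have : Fintype.card (Fin t) = 1 := by
          rw [← Finset.card_univ, ← hu, Finset.card_singleton]
        simp at this
        omega
      · ext b
        simp only [Finset.mem_inter, Finset.mem_biUnion, Finset.mem_singleton,
          Finset.mem_compl, Finset.notMem_empty, iff_false, not_and]
        rintro ⟨j, rfl, hbj⟩ ⟨k, hk, hbk⟩
        rw [hIi] at hbj
        simp only [Finset.mem_singleton] at hbj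
        subst hbj
        exact honly k hk hbk
  -- the kernel equivalence
  have key : ∀ x x' : List (Fin q),
      ((fun i => channelOutput (𝓘 i) x) = fun i => channelOutput (𝓘 i) x') ↔
      ((fun e : {e : Finset (Fin q) // e.card = 2 ∧ ∃ i, e ⊆ 𝓘 i} =>
          channelOutput e.1 x) = fun e => channelOutput e.1 x') := by
    intro x x'
    constructor
    · intro hI
      funext e
      obtain ⟨e, hcard, j, hej⟩ := e
      have hIj : channelOutput (𝓘 j) x = channelOutput (𝓘 j) x' := congrFun hI j
      show channelOutput e x = channelOutput e x'
      unfold channelOutput at *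
      rw [filter_subset_eq e (𝓘 j) hej x, filter_subset_eq e (𝓘 j) hej x', hIj]
    · intro hE
      funext i
      have hEe : ∀ (e : Finset (Fin q)), e.card = 2 → (∃ j, e ⊆ 𝓘 j) →
          channelOutput e x = channelOutput e x' := by
        intro e h1 h2
        exact congrFun hE ⟨e, h1, h2⟩
      show channelOutput (𝓘 i) x = channelOutput (𝓘 i) x'
      have hcnt : ∀ a ∈ 𝓘 i, x.count a = x'.count a := by
        intro a ha
        obtain ⟨e, hcard, hej, hae⟩ := edge_exists i a ha
        have h := hEe e hcard hej
        unfold channelOutput at h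
        have h1 : (x.filter (fun b => b ∈ e)).count a = x.count a :=
          List.count_filter (by simpa using hae)
        have h2 : (x'.filter (fun b => b ∈ e)).count a = x'.count a :=
          List.count_filter (by simpa using hae)
        rw [← h1, ← h2, h]
      apply pair_reconstruct (𝓘 i)
      · intro a ha
        unfold channelOutput at ha
        simp only [List.mem_filter, decide_eq_true_eq] at ha
        exact ha.2
      · intro a ha
        unfold channelOutput at ha
        simp only [List.mem_filter, decide_eq_true_eq] at ha
        exact ha.2
      · intro u v hu hv huv
        have hsubI : ({u, v} : Finset (Fin q)) ⊆ 𝓘 i := by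
          intro c hc
          simp only [Finset.mem_insert, Finset.mem_singleton] at hc
          rcases hc with rfl | rfl <;> assumption
        have h := hEe {u, v} (Finset.card_pair huv) ⟨i, hsubI⟩
        unfold channelOutput at *
        rw [← filter_subset_eq _ _ hsubI x, ← filter_subset_eq _ _ hsubI x', h]
      · intro a ha
        unfold channelOutput
        rw [List.count_filter (by simpa using ha), List.count_filter (by simpa using ha)]
        exact hcnt a ha
  -- counting
  have hset : ∀ {ι : Type} (𝓙 : ι → Finset (Fin q)) (n : ℕ),
      channelOutputs 𝓙 n =
        (fun x => fun i => channelOutput (𝓙 i) x) '' {x : List (Fin q) | x.length = n} := by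
    intro ι 𝓙 n
    ext y
    simp only [channelOutputs, Set.mem_setOf_eq, Set.mem_image]
    constructor
    · rintro ⟨x, hx, rfl⟩
      exact ⟨x, hx, rfl⟩
    · rintro ⟨x, hx, rfl⟩
      exact ⟨x, hx, rfl⟩
  have hn : ∀ n : ℕ, (channelOutputs 𝓘 n).ncard =
      (channelOutputs
        (fun e : {e : Finset (Fin q) // e.card = 2 ∧ ∃ i, e ⊆ 𝓘 i} => e.1) n).ncard := by
    intro n
    rw [hset 𝓘 n, hset _ n]
    exact ncard_image_ker _ _ _ key
  refine ⟨hn, ?_⟩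
  have hfun : (fun n : ℕ =>
      Real.logb q ((channelOutputs 𝓘 n).ncard : ℝ) / (n : ℝ)) = fun n : ℕ =>
      Real.logb q (((channelOutputs
        (fun e : {e : Finset (Fin q) // e.card = 2 ∧ ∃ i, e ⊆ 𝓘 i} => e.1) n).ncard : ℝ)) /
        (n : ℝ) := by
    funext n
    rw [hn n]
  unfold capacity
  rw [hfun]
end

section
/- Let 𝓘 and 𝓘' be two irreducible sequences (each of length at least 2) of coloring channels over Σ = [q]. If the pairs graph P_𝓘 is a subgraph of P_𝓘' (i.e., E_𝓘 ⊆ E_𝓘'), then |A_𝓘(n)| ≤ |A_𝓘'(n)| for all n, and cap(𝓘) ≤ cap(𝓘'). -/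
lemma filter_filter_of_imp {α} (l : List α) (p P : α → Prop) [DecidablePred p] [DecidablePred P]
    (h : ∀ a, p a → P a) :
    (l.filter (fun a => P a)).filter (fun a => p a) = l.filter (fun a => p a) := by
  rw [List.filter_filter]
  apply List.filter_congr
  intro a _
  by_cases hpa : p a <;> simp [hpa, h a]

lemma eq_of_pairwise_proj {α} [DecidableEq α] (S : Finset α) :
    ∀ s s' : List α, (∀ a ∈ s, a ∈ S) → (∀ a ∈ s', a ∈ S) →
    (∀ u ∈ S, ∀ v ∈ S,
      s.filter (fun a => a = u ∨ a = v) = s'.filter (fun a => a = u ∨ a = v)) →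
    s = s' := by
  intro s
  induction s with
  | nil =>
    intro s' _ hs' hproj
    cases s' with
    | nil => rfl
    | cons b l =>
      have hb : b ∈ S := hs' b (by simp)
      have := hproj b hb b hb
      simp [List.filter_cons] at this
  | cons a s ih =>
    intro s' hs hs' hproj
    have ha : a ∈ S := hs a (by simp)
    cases s' with
    | nil =>
      have := hproj a ha a ha
      simp [List.filter_cons] at this
    | cons b s₂ =>
      have hb : b ∈ S := hs' b (by simp)
      have hab : a = b := by
        have h := hproj a ha b hb
        rw [List.filter_cons_of_pos (by simp), List.filter_cons_of_pos (by simp)] at h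
        exact (List.cons.injEq _ _ _ _ ▸ h).1
      subst hab
      congr 1
      apply ih
      · intro x hx; exact hs x (by simp [hx])
      · intro x hx; exact hs' x (by simp [hx])
      · intro u hu v hv
        have h := hproj u hu v hv
        by_cases hp : a = u ∨ a = v
        · rw [List.filter_cons_of_pos (by simpa), List.filter_cons_of_pos (by simpa)] at h
          exact (List.cons.injEq _ _ _ _ ▸ h).2
        · rwa [List.filter_cons_of_neg (by simpa using hp), List.filter_cons_of_neg (by simpa using hp)] at h

lemma pair_proj_eq {q t t' : ℕ} {𝓘 : Fin t → Finset (Fin q)} {𝓙 : Fin t' → Finset (Fin q)}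
    (hedges : ∀ e : Finset (Fin q), e.card = 2 → (∃ i, e ⊆ 𝓘 i) → ∃ j, e ⊆ 𝓙 j)
    {x x' : List (Fin q)} (h : ∀ j, channelOutput (𝓙 j) x = channelOutput (𝓙 j) x')
    {i : Fin t} {u v : Fin q} (hu : u ∈ 𝓘 i) (hv : v ∈ 𝓘 i) (huv : u ≠ v) :
    x.filter (fun a => a = u ∨ a = v) = x'.filter (fun a => a = u ∨ a = v) := by
  obtain ⟨j, hj⟩ := hedges {u, v} (Finset.card_pair huv)
    ⟨i, by intro a ha; simp at ha; rcases ha with rfl | rfl <;> assumption⟩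
  have hu' : u ∈ 𝓙 j := hj (by simp)
  have hv' : v ∈ 𝓙 j := hj (by simp)
  have key : ∀ y : List (Fin q), y.filter (fun a => a = u ∨ a = v)
      = (channelOutput (𝓙 j) y).filter (fun a => a = u ∨ a = v) := by
    intro y
    exact (filter_filter_of_imp y (fun a => a = u ∨ a = v) (fun a => a ∈ 𝓙 j)
      (by rintro a (rfl | rfl) <;> assumption)).symm
  rw [key x, key x', h j]

lemma channelOutput_eq_of {q t t' : ℕ} {𝓘 : Fin t → Finset (Fin q)} {𝓙 : Fin t' → Finset (Fin q)}
    (hcard : ∀ i, 2 ≤ (𝓘 i).card)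
    (hedges : ∀ e : Finset (Fin q), e.card = 2 → (∃ i, e ⊆ 𝓘 i) → ∃ j, e ⊆ 𝓙 j)
    {x x' : List (Fin q)} (h : ∀ j, channelOutput (𝓙 j) x = channelOutput (𝓙 j) x')
    (i : Fin t) : channelOutput (𝓘 i) x = channelOutput (𝓘 i) x' := by
  apply eq_of_pairwise_proj (𝓘 i)
  · intro a ha
    simpa [channelOutput, List.mem_filter] using (List.mem_filter.mp ha).2
  · intro a ha
    simpa [channelOutput, List.mem_filter] using (List.mem_filter.mp ha).2
  · intro u hu v hv
    have key : ∀ y : List (Fin q), (channelOutput (𝓘 i) y).filter (fun a => a = u ∨ a = v)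
        = y.filter (fun a => a = u ∨ a = v) := by
      intro y
      exact filter_filter_of_imp y (fun a => a = u ∨ a = v) (fun a => a ∈ 𝓘 i)
        (by rintro a (rfl | rfl) <;> assumption)
    rw [key x, key x']
    by_cases huv : u = v
    · subst huv
      obtain ⟨w, hw, hwu⟩ := Finset.exists_mem_ne (s := 𝓘 i) (by have := hcard i; omega) u
      have key2 : ∀ y : List (Fin q), y.filter (fun a => a = u ∨ a = u)
          = (y.filter (fun a => a = u ∨ a = w)).filter (fun a => a = u ∨ a = u) := by
        intro y
        exact (filter_filter_of_imp y (fun a => a = u ∨ a = u) (fun a => a = u ∨ a = w)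
          (by rintro a (rfl | rfl) <;> exact Or.inl rfl)).symm
      rw [key2 x, key2 x', pair_proj_eq hedges h hu hw (fun hc => hwu hc.symm)]
    · exact pair_proj_eq hedges h hu hv huv

lemma channelOutputs_subset_image {q : ℕ} {ι : Type} (𝓘 : ι → Finset (Fin q)) (n : ℕ) :
    channelOutputs 𝓘 n ⊆
      (fun f : Fin n → Fin q => fun i => channelOutput (𝓘 i) (List.ofFn f)) '' Set.univ := by
  rintro y ⟨x, hx, rfl⟩
  subst hx
  exact ⟨fun i => x.get (Fin.cast rfl i), trivial, by simp [List.ofFn_get]⟩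

lemma channelOutputs_finite {q : ℕ} {ι : Type} (𝓘 : ι → Finset (Fin q)) (n : ℕ) :
    (channelOutputs 𝓘 n).Finite :=
  ((Set.finite_univ.image _)).subset (channelOutputs_subset_image 𝓘 n)

lemma channelOutputs_ncard_le {q : ℕ} {ι : Type} (𝓘 : ι → Finset (Fin q)) (n : ℕ) :
    (channelOutputs 𝓘 n).ncard ≤ q ^ n := by
  calc (channelOutputs 𝓘 n).ncard
      ≤ ((fun f : Fin n → Fin q => fun i => channelOutput (𝓘 i) (List.ofFn f)) '' Set.univ).ncard :=
        Set.ncard_le_ncard (channelOutputs_subset_image 𝓘 n) (Set.finite_univ.image _)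
    _ ≤ (Set.univ : Set (Fin n → Fin q)).ncard := Set.ncard_image_le Set.finite_univ
    _ = q ^ n := by rw [Set.ncard_univ]; simp

lemma channelOutputs_nonempty {q : ℕ} {ι : Type} (hq : 1 ≤ q) (𝓘 : ι → Finset (Fin q)) (n : ℕ) :
    (channelOutputs 𝓘 n).Nonempty :=
  ⟨_, ⟨List.replicate n ⟨0, hq⟩, by simp, rfl⟩⟩

lemma two_le_card_of_irred {q t : ℕ} (ht : 2 ≤ t) (𝓘 : Fin t → Finset (Fin q))
    (hne : ∀ i, (𝓘 i).Nonempty)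
    (hsub : ∀ i j : Fin t, i ≠ j → ¬ 𝓘 i ⊆ 𝓘 j)
    (hnsep : ¬ ∃ S : Finset (Fin t), S.Nonempty ∧ S ≠ Finset.univ ∧
      (S.biUnion 𝓘) ∩ (Sᶜ.biUnion 𝓘) = ∅) :
    ∀ i, 2 ≤ (𝓘 i).card := by
  intro i
  by_contra hlt
  push_neg at hlt
  have h1 : (𝓘 i).card = 1 := by have := Finset.card_pos.mpr (hne i); omega
  obtain ⟨a, ha⟩ := Finset.card_eq_one.mp h1
  push_neg at hnsep
  have hint := hnsep {i} (by simp) (by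
    intro hc
    have := congrArg Finset.card hc
    simp [Finset.card_univ] at this
    omega)
  obtain ⟨b, hb⟩ := hint
  simp [Finset.mem_biUnion] at hb
  obtain ⟨hb1, j, hji, hb2⟩ := hb
  have hba : b = a := by rw [ha] at hb1; simpa using hb1
  subst hba
  exact hsub i j (fun hc => hji hc.symm) (by rw [ha]; simpa using hb2)

noncomputable def pick {q : ℕ} {ι : Type} (𝓘 : ι → Finset (Fin q)) (n : ℕ)
    (y : ι → List (Fin q)) (h : y ∈ channelOutputs 𝓘 n) : List (Fin q) :=
  (h : ∃ x : List (Fin q), x.length = n ∧ y = fun i => channelOutput (𝓘 i) x).choose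

lemma pick_spec {q : ℕ} {ι : Type} (𝓘 : ι → Finset (Fin q)) (n : ℕ)
    (y : ι → List (Fin q)) (h : y ∈ channelOutputs 𝓘 n) :
    (pick 𝓘 n y h).length = n ∧ y = fun i => channelOutput (𝓘 i) (pick 𝓘 n y h) :=
  (h : ∃ x : List (Fin q), x.length = n ∧ y = fun i => channelOutput (𝓘 i) x).choose_spec

lemma ncard_mono {q t t' : ℕ} {𝓘 : Fin t → Finset (Fin q)} {𝓙 : Fin t' → Finset (Fin q)}
    (hcard : ∀ i, 2 ≤ (𝓘 i).card)
    (hedges : ∀ e : Finset (Fin q), e.card = 2 → (∃ i, e ⊆ 𝓘 i) → ∃ j, e ⊆ 𝓙 j)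
    (n : ℕ) : (channelOutputs 𝓘 n).ncard ≤ (channelOutputs 𝓙 n).ncard := by
  classical
  refine Set.ncard_le_ncard_of_injOn
    (fun y => if h : y ∈ channelOutputs 𝓘 n
      then (fun j => channelOutput (𝓙 j) (pick 𝓘 n y h)) else fun _ => [])
    ?_ ?_ (channelOutputs_finite 𝓙 n)
  · intro y hy
    simp only [dif_pos hy]
    exact ⟨pick 𝓘 n y hy, (pick_spec 𝓘 n y hy).1, rfl⟩
  · intro y hy y' hy' hf
    simp only [dif_pos hy, dif_pos hy'] at hf
    have hout : ∀ j, channelOutput (𝓙 j) (pick 𝓘 n y hy)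
        = channelOutput (𝓙 j) (pick 𝓘 n y' hy') := fun j => congrFun hf j
    rw [(pick_spec 𝓘 n y hy).2, (pick_spec 𝓘 n y' hy').2]
    funext i
    exact channelOutput_eq_of hcard hedges hout i

lemma capacity_mono {q t t' : ℕ} (hq : 2 ≤ q) {𝓘 : Fin t → Finset (Fin q)}
    {𝓙 : Fin t' → Finset (Fin q)}
    (hmono : ∀ n, (channelOutputs 𝓘 n).ncard ≤ (channelOutputs 𝓙 n).ncard) :
    capacity 𝓘 ≤ capacity 𝓙 := by
  have hq1 : (1 : ℝ) < q := by
    have : 1 < q := by omega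
    exact_mod_cast this
  have posI : ∀ n, 0 < (channelOutputs 𝓘 n).ncard := fun n =>
    (Set.ncard_pos (channelOutputs_finite 𝓘 n)).mpr (channelOutputs_nonempty (by omega) 𝓘 n)
  have posJ : ∀ n, 0 < (channelOutputs 𝓙 n).ncard := fun n =>
    (Set.ncard_pos (channelOutputs_finite 𝓙 n)).mpr (channelOutputs_nonempty (by omega) 𝓙 n)
  set u : ℕ → ℝ := fun n => Real.logb q ((channelOutputs 𝓘 n).ncard : ℝ) / (n : ℝ) with hu
  set v : ℕ → ℝ := fun n => Real.logb q ((channelOutputs 𝓙 n).ncard : ℝ) / (n : ℝ) with hv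
  have hnn : ∀ n, 0 ≤ u n := by
    intro n
    apply div_nonneg _ (by positivity)
    exact Real.logb_nonneg hq1 (by exact_mod_cast posI n)
  have hle : ∀ n, u n ≤ v n := by
    intro n
    rcases Nat.eq_zero_or_pos n with rfl | hn
    · simp [hu, hv]
    · have hn' : (0:ℝ) < n := by exact_mod_cast hn
      apply div_le_div_of_nonneg_right ?_ hn'.le
      refine (Real.logb_le_logb hq1 ?_ ?_).mpr ?_
      · exact_mod_cast posI n
      · exact_mod_cast posJ n
      · exact_mod_cast hmono n
  have hub : ∀ n, v n ≤ 1 := by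
    intro n
    rcases Nat.eq_zero_or_pos n with rfl | hn
    · simp [hv]
    · have hn' : (0:ℝ) < n := by exact_mod_cast hn
      rw [hv]
      simp only
      rw [div_le_one hn']
      calc Real.logb q ((channelOutputs 𝓙 n).ncard : ℝ)
          ≤ Real.logb q ((q : ℝ) ^ n) := by
            refine (Real.logb_le_logb hq1 (by exact_mod_cast posJ n) (by positivity)).mpr ?_
            have := channelOutputs_ncard_le 𝓙 n
            exact_mod_cast this
        _ = n := by rw [Real.logb_pow, Real.logb_self_eq_one hq1, mul_one]
  refine Filter.limsup_le_limsup (Filter.Eventually.of_forall hle) ?_ ?_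
  · exact Filter.IsBoundedUnder.isCoboundedUnder_le
      ⟨0, Filter.eventually_map.2 (Filter.Eventually.of_forall hnn)⟩
  · exact ⟨1, Filter.eventually_map.2 (Filter.Eventually.of_forall hub)⟩


/-- monotonicity of the number of output tuples and of the
capacity with respect to inclusion of pairs graphs. -/
theorem pairs_graph_monotone (q t t' : ℕ) (hq : 2 ≤ q) (ht : 2 ≤ t) (ht' : 2 ≤ t')
    (𝓘 : Fin t → Finset (Fin q)) (𝓙 : Fin t' → Finset (Fin q))
    (hne : ∀ i, (𝓘 i).Nonempty) (hne' : ∀ j, (𝓙 j).Nonempty)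
    (hsub : ∀ i j : Fin t, i ≠ j → ¬ 𝓘 i ⊆ 𝓘 j)
    (hsub' : ∀ i j : Fin t', i ≠ j → ¬ 𝓙 i ⊆ 𝓙 j)
    (hnsep : ¬ ∃ S : Finset (Fin t), S.Nonempty ∧ S ≠ Finset.univ ∧
      (S.biUnion 𝓘) ∩ (Sᶜ.biUnion 𝓘) = ∅)
    (hnsep' : ¬ ∃ S : Finset (Fin t'), S.Nonempty ∧ S ≠ Finset.univ ∧
      (S.biUnion 𝓙) ∩ (Sᶜ.biUnion 𝓙) = ∅)
    (hedges : ∀ e : Finset (Fin q), e.card = 2 → (∃ i, e ⊆ 𝓘 i) → ∃ j, e ⊆ 𝓙 j) :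
    (∀ n : ℕ, (channelOutputs 𝓘 n).ncard ≤ (channelOutputs 𝓙 n).ncard) ∧
    capacity 𝓘 ≤ capacity 𝓙 := by
  have hcard := two_le_card_of_irred ht 𝓘 hne hsub hnsep
  have h1 : ∀ n : ℕ, (channelOutputs 𝓘 n).ncard ≤ (channelOutputs 𝓙 n).ncard :=
    fun n => ncard_mono hcard hedges n
  exact ⟨h1, capacity_mono hq h1⟩
end

section
/- Let 𝓘 = (I_1,…,I_t) be a cycle of length t ≥ 4 over Σ = [q], and let c_{t−1} denote the capacity of a path of length t−1 over Σ. Then c_{t−1} ≤ cap(𝓘); moreover cap(𝓘) ≤ (1/√3 + (1 + 1/√3) H(2−√3)) log_q 2 when t = 4, and cap(𝓘) ≤ log_q 4 when t ≥ 5. -/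
namespace CapAux

/-- Finset of lists of given length over `Fin q`. -/
def listsLen (q : ℕ) : ℕ → Finset (List (Fin q))
  | 0 => {[]}
  | n+1 => ((Finset.univ ×ˢ listsLen q n).image fun p => p.1 :: p.2)

lemma mem_listsLen {q : ℕ} : ∀ (n : ℕ) (x : List (Fin q)), x ∈ listsLen q n ↔ x.length = n
  | 0, x => by cases x <;> simp [listsLen]
  | n+1, x => by
    cases x with
    | nil => simp [listsLen]
    | cons a t =>
      simp only [listsLen, Finset.mem_image, Finset.mem_product, Finset.mem_univ, true_and,
        Prod.exists, List.length_cons, Nat.add_left_inj]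
      constructor
      · rintro ⟨b, u, hu, h⟩
        injection h with h1 h2
        exact (mem_listsLen n t).1 (h2 ▸ hu)
      · intro h
        exact ⟨a, t, (mem_listsLen n t).2 h, rfl⟩

lemma card_listsLen {q : ℕ} : ∀ n : ℕ, (listsLen q n).card = q ^ n
  | 0 => by simp [listsLen]
  | n+1 => by
    rw [listsLen, Finset.card_image_of_injOn, Finset.card_product, Finset.card_univ,
      Fintype.card_fin, card_listsLen n, pow_succ, mul_comm]
    intro p _ p' _ h
    simpa [Prod.ext_iff] using h

variable {q : ℕ} {ι : Type}

lemma channelOutputs_eq_image (𝓘 : ι → Finset (Fin q)) (n : ℕ) :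
    channelOutputs 𝓘 n =
      (fun x : List (Fin q) => fun i => channelOutput (𝓘 i) x) '' ↑(listsLen q n) := by
  ext y
  simp only [channelOutputs, Set.mem_setOf_eq, Set.mem_image, Finset.mem_coe, mem_listsLen]
  constructor
  · rintro ⟨x, hx, rfl⟩; exact ⟨x, hx, rfl⟩
  · rintro ⟨x, hx, rfl⟩; exact ⟨x, hx, rfl⟩

lemma channelOutputs_finite (𝓘 : ι → Finset (Fin q)) (n : ℕ) :
    (channelOutputs 𝓘 n).Finite := by
  rw [channelOutputs_eq_image]
  exact (Set.toFinite _).image _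

lemma channelOutputs_nonempty (hq : 0 < q) (𝓘 : ι → Finset (Fin q)) (n : ℕ) :
    (channelOutputs 𝓘 n).Nonempty :=
  ⟨_, ⟨List.replicate n ⟨0, hq⟩, List.length_replicate, rfl⟩⟩

lemma one_le_ncard (hq : 0 < q) (𝓘 : ι → Finset (Fin q)) (n : ℕ) :
    1 ≤ (channelOutputs 𝓘 n).ncard :=
  (Set.ncard_pos (channelOutputs_finite 𝓘 n)).2 (channelOutputs_nonempty hq 𝓘 n)

lemma ncard_le_pow (𝓘 : ι → Finset (Fin q)) (n : ℕ) :
    (channelOutputs 𝓘 n).ncard ≤ q ^ n := by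
  rw [channelOutputs_eq_image]
  calc ((fun x : List (Fin q) => fun i => channelOutput (𝓘 i) x) '' ↑(listsLen q n)).ncard
      ≤ (↑(listsLen q n) : Set (List (Fin q))).ncard := Set.ncard_image_le (Set.toFinite _)
    _ = q ^ n := by rw [Set.ncard_coe_finset, card_listsLen]

end CapAux
section A2
namespace CapAux

variable {q : ℕ} {ι : Type}

lemma one_lt_q_real (hq : 2 ≤ q) : (1 : ℝ) < (q : ℝ) := by
  have : (2 : ℝ) ≤ (q : ℝ) := by exact_mod_cast hq
  linarith

lemma f_nonneg (hq : 2 ≤ q) (𝓘 : ι → Finset (Fin q)) (n : ℕ) :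
    0 ≤ Real.logb q ((channelOutputs 𝓘 n).ncard : ℝ) / (n : ℝ) := by
  apply div_nonneg _ (Nat.cast_nonneg n)
  apply Real.logb_nonneg (one_lt_q_real hq)
  exact_mod_cast one_le_ncard (by omega) 𝓘 n

lemma tendsto_logdiv : Filter.Tendsto (fun n : ℕ => Real.log ((n : ℝ) + 2) / (n : ℝ))
    Filter.atTop (nhds 0) := by
  have h1 : Filter.Tendsto (fun n : ℕ => ((n : ℝ) + 2)) Filter.atTop Filter.atTop :=
    Filter.tendsto_atTop_add_const_right _ 2 tendsto_natCast_atTop_atTop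
  have h2 : Filter.Tendsto (fun n : ℕ => Real.log ((n : ℝ) + 2) / ((n : ℝ) + 2))
      Filter.atTop (nhds 0) :=
    (Real.isLittleO_log_id_atTop.tendsto_div_nhds_zero).comp h1
  have h3 : Filter.Tendsto (fun n : ℕ => ((n : ℝ) + 2) / (n : ℝ)) Filter.atTop (nhds 1) := by
    have h0 : Filter.Tendsto (fun n : ℕ => 1 + 2 / (n : ℝ)) Filter.atTop (nhds 1) := by
      have := tendsto_const_div_atTop_nhds_zero_nat (2:ℝ)
      simpa using Filter.Tendsto.const_add 1 this
    apply h0.congr'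
    filter_upwards [Filter.eventually_ge_atTop 1] with n hn
    have hn' : (n : ℝ) ≠ 0 := by positivity
    field_simp
  have h4 := h2.mul h3
  rw [zero_mul] at h4
  apply h4.congr
  intro n
  have hb : ((n : ℝ) + 2) ≠ 0 := by positivity
  by_cases hc : (n : ℝ) = 0
  · simp [hc]
  · field_simp

lemma capacity_le_of_bound (hq : 2 ≤ q) (𝓘 : ι → Finset (Fin q)) (K lam : ℝ) (E : ℕ)
    (hK : 1 ≤ K) (hlam : 1 ≤ lam)
    (h : ∀ n : ℕ, 1 ≤ n → ((channelOutputs 𝓘 n).ncard : ℝ) ≤ K * ((n : ℝ) + 2) ^ E * lam ^ n) :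
    capacity 𝓘 ≤ Real.logb q lam := by
  have h1q := one_lt_q_real hq
  set f : ℕ → ℝ := fun n : ℕ =>
    Real.logb q ((channelOutputs 𝓘 n).ncard : ℝ) / (n : ℝ) with hf
  set g : ℕ → ℝ := fun n : ℕ =>
    (Real.logb q K + (E : ℝ) * Real.logb q ((n : ℝ) + 2)) / (n : ℝ) + Real.logb q lam with hg
  have hfg : f ≤ᶠ[Filter.atTop] g := by
    filter_upwards [Filter.eventually_ge_atTop 1] with n hn
    have hn' : (n : ℝ) ≠ 0 := by positivity
    have hcard : (0 : ℝ) < ((channelOutputs 𝓘 n).ncard : ℝ) := by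
      exact_mod_cast one_le_ncard (by omega) 𝓘 n
    have hb : Real.logb q ((channelOutputs 𝓘 n).ncard : ℝ) ≤
        Real.logb q (K * ((n : ℝ) + 2) ^ E * lam ^ n) :=
      Real.logb_le_logb_of_le h1q hcard (h n hn)
    have hK0 : (0 : ℝ) < K := by linarith
    have hn2 : (0 : ℝ) < (n : ℝ) + 2 := by positivity
    have hlam0 : (0 : ℝ) < lam := by linarith
    have hexp : Real.logb q (K * ((n : ℝ) + 2) ^ E * lam ^ n) =
        Real.logb q K + (E : ℝ) * Real.logb q ((n : ℝ) + 2) + (n : ℝ) * Real.logb q lam := by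
      rw [Real.logb_mul (by positivity) (by positivity),
        Real.logb_mul (by positivity) (by positivity), Real.logb_pow, Real.logb_pow]
    have hnpos : (0 : ℝ) < (n : ℝ) := by positivity
    have hle : f n ≤ (Real.logb q K + (E : ℝ) * Real.logb q ((n : ℝ) + 2)
        + (n : ℝ) * Real.logb q lam) / (n : ℝ) :=
      (div_le_div_iff_of_pos_right hnpos).mpr (hb.trans_eq hexp)
    have heq : (Real.logb q K + (E : ℝ) * Real.logb q ((n : ℝ) + 2)
        + (n : ℝ) * Real.logb q lam) / (n : ℝ) = g n := by
      rw [hg]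
      field_simp
    exact hle.trans_eq heq
  have hgt : Filter.Tendsto g Filter.atTop (nhds (Real.logb q lam)) := by
    have hz : Filter.Tendsto (fun n : ℕ =>
        (Real.logb q K + (E : ℝ) * Real.logb q ((n : ℝ) + 2)) / (n : ℝ))
        Filter.atTop (nhds 0) := by
      have t1 := tendsto_const_div_atTop_nhds_zero_nat (Real.logb q K)
      have t2 := tendsto_logdiv.const_mul ((E : ℝ) / Real.log q)
      have := t1.add t2
      rw [mul_zero, add_zero] at this
      apply this.congr
      intro n
      simp only [Real.logb]
      ring
    have := hz.add (tendsto_const_nhds :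
      Filter.Tendsto (fun _ : ℕ => Real.logb q lam) Filter.atTop (nhds (Real.logb q lam)))
    rw [zero_add] at this
    exact this
  have hcob : Filter.IsCoboundedUnder (· ≤ ·) Filter.atTop f := by
    apply Filter.IsBoundedUnder.isCoboundedUnder_le (α := ℝ)
    exact Filter.isBoundedUnder_of ⟨0, fun n => f_nonneg hq 𝓘 n⟩
  have hbdd : Filter.IsBoundedUnder (· ≤ ·) Filter.atTop g := hgt.isBoundedUnder_le
  calc capacity 𝓘 = Filter.limsup f Filter.atTop := rfl
    _ ≤ Filter.limsup g Filter.atTop := Filter.limsup_le_limsup hfg hcob hbdd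
    _ = Real.logb q lam := hgt.limsup_eq

end CapAux
end A2
section A3
namespace CapAux

variable {q : ℕ} {ι ι' : Type}

lemma exists_perm_comp {m : ℕ} (τ σ : Fin m → Fin q)
    (hτ : Function.Injective τ) (hσ : Function.Injective σ) :
    ∃ e : Equiv.Perm (Fin q), ∀ j, e (τ j) = σ j := by
  classical
  have hcard : Fintype.card ((Set.range τ)ᶜ : Set (Fin q)) =
      Fintype.card ((Set.range σ)ᶜ : Set (Fin q)) := by
    rw [Fintype.card_compl_set, Fintype.card_compl_set,
      Set.card_range_of_injective hτ, Set.card_range_of_injective hσ]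
  let e' := Fintype.equivOfCardEq hcard
  let Eτ : Fin m ⊕ ((Set.range τ)ᶜ : Set (Fin q)) ≃ Fin q :=
    ((Equiv.ofInjective τ hτ).sumCongr (Equiv.refl _)).trans
      (Equiv.Set.sumCompl (Set.range τ))
  let Eσ : Fin m ⊕ ((Set.range σ)ᶜ : Set (Fin q)) ≃ Fin q :=
    ((Equiv.ofInjective σ hσ).sumCongr (Equiv.refl _)).trans
      (Equiv.Set.sumCompl (Set.range σ))
  refine ⟨Eτ.symm.trans (((Equiv.refl (Fin m)).sumCongr e').trans Eσ), fun j => ?_⟩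
  have h1 : Eτ (Sum.inl j) = τ j := by
    simp [Eτ, Equiv.Set.sumCompl_apply_inl]
  have h2 : Eτ.symm (τ j) = Sum.inl j := by rw [← h1, Equiv.symm_apply_apply]
  simp [h2, Eσ, Equiv.Set.sumCompl_apply_inl]

lemma ncard_le_of_perm (𝓘 : ι → Finset (Fin q)) (𝓙 : ι' → Finset (Fin q))
    (F : ι' → ι) (e : Equiv.Perm (Fin q))
    (h : ∀ (j : ι') (a : Fin q), a ∈ 𝓙 j ↔ e a ∈ 𝓘 (F j)) (n : ℕ) :
    (channelOutputs 𝓙 n).ncard ≤ (channelOutputs 𝓘 n).ncard := by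
  classical
  set Φ : (ι → List (Fin q)) → (ι' → List (Fin q)) :=
    fun y j => (y (F j)).map e.symm with hΦ
  have hsub : channelOutputs 𝓙 n ⊆ Φ '' channelOutputs 𝓘 n := by
    rintro - ⟨w, hw, rfl⟩
    refine ⟨fun i => channelOutput (𝓘 i) (w.map e), ⟨w.map e, by simpa using hw, rfl⟩, ?_⟩
    funext j
    show (channelOutput (𝓘 (F j)) (w.map e)).map e.symm = channelOutput (𝓙 j) w
    rw [channelOutput, channelOutput, List.filter_map, List.map_map]
    have : (e.symm ∘ e : Fin q → Fin q) = id := by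
      funext a; simp
    rw [this, List.map_id]
    apply List.filter_congr
    intro a _
    simp only [Function.comp_apply, decide_eq_decide]
    exact (h j a).symm
  calc (channelOutputs 𝓙 n).ncard ≤ (Φ '' channelOutputs 𝓘 n).ncard :=
        Set.ncard_le_ncard hsub ((channelOutputs_finite 𝓘 n).image _)
    _ ≤ (channelOutputs 𝓘 n).ncard := Set.ncard_image_le (channelOutputs_finite 𝓘 n)

lemma f_le_one (hq : 2 ≤ q) (𝓘 : ι → Finset (Fin q)) (n : ℕ) :
    Real.logb q ((channelOutputs 𝓘 n).ncard : ℝ) / (n : ℝ) ≤ 1 := by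
  rcases Nat.eq_zero_or_pos n with rfl | hn
  · simp
  have h1q := one_lt_q_real hq
  have hcard : (0 : ℝ) < ((channelOutputs 𝓘 n).ncard : ℝ) := by
    exact_mod_cast one_le_ncard (by omega) 𝓘 n
  have hle : Real.logb q ((channelOutputs 𝓘 n).ncard : ℝ) ≤ (n : ℝ) := by
    have := Real.logb_le_logb_of_le h1q hcard
      (by exact_mod_cast ncard_le_pow 𝓘 n : ((channelOutputs 𝓘 n).ncard : ℝ) ≤ (q : ℝ) ^ n)
    rwa [Real.logb_pow, Real.logb_self_eq_one h1q, mul_one] at this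
  rw [div_le_one (by positivity : (0:ℝ) < (n:ℝ))]
  exact hle

lemma capacity_mono (hq : 2 ≤ q) (𝓘 : ι → Finset (Fin q)) (𝓙 : ι' → Finset (Fin q))
    (h : ∀ n, (channelOutputs 𝓙 n).ncard ≤ (channelOutputs 𝓘 n).ncard) :
    capacity 𝓙 ≤ capacity 𝓘 := by
  apply Filter.limsup_le_limsup
  · apply Filter.Eventually.of_forall
    intro n
    rcases Nat.eq_zero_or_pos n with rfl | hn
    · simp
    have hcard : (0 : ℝ) < ((channelOutputs 𝓙 n).ncard : ℝ) := by
      exact_mod_cast one_le_ncard (by omega) 𝓙 n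
    exact (div_le_div_iff_of_pos_right (by positivity : (0:ℝ) < (n:ℝ))).mpr
      (Real.logb_le_logb_of_le (one_lt_q_real hq) hcard (by exact_mod_cast h n))
  · exact Filter.IsBoundedUnder.isCoboundedUnder_le
      (Filter.isBoundedUnder_of ⟨0, fun n => f_nonneg hq 𝓙 n⟩)
  · exact Filter.isBoundedUnder_of ⟨1, fun n => f_le_one hq 𝓘 n⟩

end CapAux
end A3
section A4
namespace CapAux

variable {q s : ℕ}

lemma mem_chan (σ : Fin (s+1) → Fin q) (hσ : Function.Injective σ)
    (𝓘 : Fin (s+1) → Finset (Fin q)) (h𝓘 : ∀ i, 𝓘 i = {σ (i-1), σ i})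
    (k i : Fin (s+1)) : σ k ∈ 𝓘 i ↔ i = k + 1 ∨ i = k := by
  rw [h𝓘 i, Finset.mem_insert, Finset.mem_singleton, hσ.eq_iff, hσ.eq_iff]
  constructor
  · rintro (h | h)
    · left; rw [eq_sub_iff_add_eq] at h; exact h.symm
    · right; exact h.symm
  · rintro (h | h)
    · left; rw [eq_sub_iff_add_eq]; exact h.symm
    · right; exact h.symm

lemma junk_not_mem (σ : Fin (s+1) → Fin q)
    (𝓘 : Fin (s+1) → Finset (Fin q)) (h𝓘 : ∀ i, 𝓘 i = {σ (i-1), σ i})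
    {a : Fin q} (ha : a ∉ Set.range σ) (i : Fin (s+1)) : a ∉ 𝓘 i := by
  rw [h𝓘 i, Finset.mem_insert, Finset.mem_singleton]
  rintro (h | h) <;> exact ha ⟨_, h.symm⟩

lemma deg_le_two (σ : Fin (s+1) → Fin q) (hσ : Function.Injective σ)
    (𝓘 : Fin (s+1) → Finset (Fin q)) (h𝓘 : ∀ i, 𝓘 i = {σ (i-1), σ i})
    (a : Fin q) : (Finset.univ.filter (fun i : Fin (s+1) => a ∈ 𝓘 i)).card ≤ 2 := by
  classical
  by_cases ha : a ∈ Set.range σ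
  · obtain ⟨k, rfl⟩ := ha
    have hsub : (Finset.univ.filter (fun i : Fin (s+1) => σ k ∈ 𝓘 i)) ⊆ {k + 1, k} := by
      intro i hi
      rw [Finset.mem_filter] at hi
      rw [mem_chan σ hσ 𝓘 h𝓘 k i] at hi
      simpa [Finset.mem_insert, Finset.mem_singleton] using hi.2
    calc _ ≤ ({k + 1, k} : Finset (Fin (s+1))).card := Finset.card_le_card hsub
      _ ≤ 2 := by
        apply le_trans (Finset.card_insert_le _ _)
        simp
  · have : (Finset.univ.filter (fun i : Fin (s+1) => a ∈ 𝓘 i)) = ∅ := by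
      apply Finset.filter_eq_empty_iff.2
      intro i _
      exact junk_not_mem σ 𝓘 h𝓘 ha i
    simp [this]

lemma sum_len_le (σ : Fin (s+1) → Fin q) (hσ : Function.Injective σ)
    (𝓘 : Fin (s+1) → Finset (Fin q)) (h𝓘 : ∀ i, 𝓘 i = {σ (i-1), σ i})
    (x : List (Fin q)) :
    ∑ i : Fin (s+1), (channelOutput (𝓘 i) x).length ≤ 2 * x.length := by
  classical
  induction x with
  | nil => simp [channelOutput]
  | cons a x ih =>
    have hstep : ∀ i : Fin (s+1), (channelOutput (𝓘 i) (a :: x)).length =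
        (if a ∈ 𝓘 i then 1 else 0) + (channelOutput (𝓘 i) x).length := by
      intro i
      rw [channelOutput, channelOutput, List.filter_cons]
      by_cases h : a ∈ 𝓘 i <;> simp [h] <;> omega
    rw [Finset.sum_congr rfl (fun i _ => hstep i), Finset.sum_add_distrib, Finset.sum_boole]
    have hdeg := deg_le_two σ hσ 𝓘 h𝓘 a
    simp only [Nat.cast_id]
    simp only [List.length_cons]
    omega

/-- If two lists of lists have the same component lengths and equal flattenings,
they are equal. -/
lemma flatten_inj {α : Type*} : ∀ (L1 L2 : List (List α)),
    L1.map List.length = L2.map List.length → L1.flatten = L2.flatten → L1 = L2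
  | [], [], _, _ => rfl
  | [], _ :: _, h, _ => by simp at h
  | _ :: _, [], h, _ => by simp at h
  | a :: L1, b :: L2, h, hf => by
    simp only [List.map_cons, List.cons.injEq] at h
    simp only [List.flatten_cons] at hf
    have hab : a = b := List.append_inj_left hf h.1
    subst hab
    have : L1.flatten = L2.flatten := by
      have := List.append_inj_right hf rfl
      exact this
    rw [flatten_inj L1 L2 h.2 this]

end CapAux
end A4
section A5
namespace CapAux

variable {q s : ℕ}

lemma part3_count (n : ℕ) (σ : Fin (s+1) → Fin q) (hσ : Function.Injective σ)
    (𝓘 : Fin (s+1) → Finset (Fin q)) (h𝓘 : ∀ i, 𝓘 i = {σ (i-1), σ i}) :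
    (channelOutputs 𝓘 n).ncard ≤ (2*n+2)^(s+1) * 2^(2*n) := by
  classical
  set code : Fin (s+1) → Fin q → Fin 2 := fun i a => if a = σ i then 1 else 0 with hcode
  set decode : Fin (s+1) → Fin 2 → Fin q := fun i b => if b = 1 then σ i else σ (i-1)
    with hdecode
  have hrec : ∀ (i : Fin (s+1)) (a : Fin q), a ∈ 𝓘 i → decode i (code i a) = a := by
    intro i a ha
    rw [h𝓘 i, Finset.mem_insert, Finset.mem_singleton] at ha
    by_cases h : a = σ i
    · simp [hcode, hdecode, h]
    · rcases ha with ha | ha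
      · simp only [hcode, hdecode, if_neg h]
        rw [if_neg (by decide), ha]
      · exact absurd ha h
  set L : (Fin (s+1) → List (Fin q)) → List (Fin 2) :=
    fun y => (List.ofFn (fun i => (y i).map (code i))).flatten with hL
  set E : (Fin (s+1) → List (Fin q)) → (Fin (s+1) → Fin (2*n+2)) × List.Vector (Fin 2) (2*n) :=
    fun y =>
      (fun i => ⟨(y i).length % (2*n+2), Nat.mod_lt _ (by omega)⟩,
       if h : (L y).length ≤ 2*n then
         ⟨L y ++ List.replicate (2*n - (L y).length) 0,
          by rw [List.length_append, List.length_replicate]; omega⟩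
       else ⟨List.replicate (2*n) 0, by simp⟩) with hE
  have hLlen : ∀ y : Fin (s+1) → List (Fin q), (L y).length = ∑ i, (y i).length := by
    intro y
    rw [hL]
    simp only [List.length_flatten, List.map_ofFn, List.sum_ofFn, Function.comp,
      List.length_map]
  have hinj : Set.InjOn E (channelOutputs 𝓘 n) := by
    rintro y ⟨x, hx, rfl⟩ y' ⟨x', hx', rfl⟩ hEq
    set y : Fin (s+1) → List (Fin q) := fun i => channelOutput (𝓘 i) x with hy
    set y' : Fin (s+1) → List (Fin q) := fun i => channelOutput (𝓘 i) x' with hy'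
    have hli : ∀ i, (y i).length ≤ n := by
      intro i
      rw [← hx]
      exact List.length_filter_le _ _
    have hli' : ∀ i, (y' i).length ≤ n := by
      intro i
      rw [← hx']
      exact List.length_filter_le _ _
    have hsum : (L y).length ≤ 2*n := by
      rw [hLlen y]
      calc ∑ i, (y i).length ≤ 2 * x.length := sum_len_le σ hσ 𝓘 h𝓘 x
        _ = 2*n := by rw [hx]
    have hsum' : (L y').length ≤ 2*n := by
      rw [hLlen y']
      calc ∑ i, (y' i).length ≤ 2 * x'.length := sum_len_le σ hσ 𝓘 h𝓘 x'
        _ = 2*n := by rw [hx']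
    have hfst := congrArg Prod.fst hEq
    have hsnd := congrArg Prod.snd hEq
    simp only [hE] at hfst hsnd
    erw [dif_pos hsum, dif_pos hsum'] at hsnd
    have hlens : ∀ i, (y i).length = (y' i).length := by
      intro i
      have := congrFun hfst i
      have hv := congrArg Fin.val this
      simp only at hv
      rwa [Nat.mod_eq_of_lt (by have := hli i; omega),
        Nat.mod_eq_of_lt (by have := hli' i; omega)] at hv
    have hLeq : (L y).length = (L y').length := by
      rw [hLlen, hLlen]
      exact Finset.sum_congr rfl (fun i _ => hlens i)
    have hlists : L y ++ List.replicate (2*n - (L y).length) 0 =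
        L y' ++ List.replicate (2*n - (L y').length) 0 := congrArg Subtype.val hsnd
    have hLL : L y = L y' := List.append_inj_left hlists hLeq
    have hcomp : (fun i => (y i).map (code i)) = (fun i => (y' i).map (code i)) := by
      rw [← List.ofFn_inj]
      apply flatten_inj _ _ _ hLL
      rw [List.map_ofFn, List.map_ofFn]
      rw [List.ofFn_inj]
      funext i
      simp only [Function.comp, List.length_map]
      exact hlens i
    funext i
    have hmem : ∀ a ∈ y i, a ∈ 𝓘 i := by
      intro a ha
      simpa using List.of_mem_filter ha
    have hmem' : ∀ a ∈ y' i, a ∈ 𝓘 i := by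
      intro a ha
      simpa using List.of_mem_filter ha
    have hrecov : ∀ (z : List (Fin q)), (∀ a ∈ z, a ∈ 𝓘 i) →
        (z.map (code i)).map (decode i) = z := by
      intro z hz
      rw [List.map_map]
      conv_rhs => rw [← List.map_id z]
      exact List.map_congr_left (fun a ha => hrec i a (hz a ha))
    rw [← hrecov (y i) hmem, ← hrecov (y' i) hmem', congrFun hcomp i]
  calc (channelOutputs 𝓘 n).ncard = (E '' channelOutputs 𝓘 n).ncard :=
        (Set.ncard_image_of_injOn hinj).symm
    _ ≤ (Set.univ : Set ((Fin (s+1) → Fin (2*n+2)) × List.Vector (Fin 2) (2*n))).ncard :=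
        Set.ncard_le_ncard (Set.subset_univ _) Set.finite_univ
    _ = Fintype.card ((Fin (s+1) → Fin (2*n+2)) × List.Vector (Fin 2) (2*n)) := by
        rw [Set.ncard_univ, Nat.card_eq_fintype_card]
    _ = (2*n+2)^(s+1) * 2^(2*n) := by
        rw [Fintype.card_prod, Fintype.card_fun, card_vector]
        simp

end CapAux
end A5
section A6
namespace CapAux

variable {q : ℕ}

attribute [local instance 10] Classical.propDecidable

lemma lex_lt_of_mid (c d : ℕ) (h : c < d) :
    ∀ (u m m' : List ℕ), (u ++ c :: m) < (u ++ d :: m')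
  | [], _, _ => List.Lex.rel h
  | _ :: u, m, m' => List.Lex.cons (lex_lt_of_mid c d h u m m')

def commP (𝓘 : Fin 4 → Finset (Fin q)) (a b : Fin q) : Prop :=
  ∀ i : Fin 4, ¬(a ∈ 𝓘 i ∧ b ∈ 𝓘 i)

def rkF (σ : Fin 4 → Fin q) (a : Fin q) : ℕ :=
  if a = σ 0 then 0 else if a = σ 1 then 1 else if a = σ 2 then 2
  else if a = σ 3 then 3 else 4 + a.val

def ReducedP (𝓘 : Fin 4 → Finset (Fin q)) (σ : Fin 4 → Fin q) (x : List (Fin q)) : Prop :=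
  ∀ (l1 : List (Fin q)) (a b : Fin q) (l2 : List (Fin q)),
    x = l1 ++ a :: b :: l2 → ¬(commP 𝓘 a b ∧ rkF σ b < rkF σ a)

lemma swap_channelOutput (I : Finset (Fin q)) (a b : Fin q) (h : ¬(a ∈ I ∧ b ∈ I))
    (l1 l2 : List (Fin q)) :
    channelOutput I (l1 ++ a :: b :: l2) = channelOutput I (l1 ++ b :: a :: l2) := by
  rw [channelOutput, channelOutput, List.filter_append, List.filter_append]
  congr 1
  by_cases ha : a ∈ I <;> by_cases hb : b ∈ I <;>
    simp [List.filter_cons, ha, hb]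
  tauto

lemma reduced_tail (𝓘 : Fin 4 → Finset (Fin q)) (σ : Fin 4 → Fin q) (a : Fin q)
    (w : List (Fin q)) (h : ReducedP 𝓘 σ (a :: w)) : ReducedP 𝓘 σ w := by
  intro l1 c d l2 hw
  exact h (a :: l1) c d l2 (by rw [hw]; rfl)

lemma ncard_le_card_reduced (𝓘 : Fin 4 → Finset (Fin q)) (σ : Fin 4 → Fin q) (n : ℕ) :
    (channelOutputs 𝓘 n).ncard ≤ ((listsLen q n).filter (ReducedP 𝓘 σ)).card := by
  classical
  set key : List (Fin q) → List ℕ := fun x => x.map (rkF σ) with hkey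
  set out : List (Fin q) → (Fin 4 → List (Fin q)) := fun x i => channelOutput (𝓘 i) x with hout
  set Sy : (Fin 4 → List (Fin q)) → Finset (List (Fin q)) :=
    fun y => (listsLen q n).filter (fun x => out x = y) with hSy
  set f : (Fin 4 → List (Fin q)) → List (Fin q) := fun y =>
    if h : (Sy y).Nonempty then Classical.choose (Finset.exists_min_image (Sy y) key h)
    else [] with hf
  have hspec : ∀ y ∈ channelOutputs 𝓘 n,
      f y ∈ Sy y ∧ ∀ x' ∈ Sy y, key (f y) ≤ key x' := by
    rintro y ⟨x, hx, rfl⟩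
    have hne : (Sy (fun i => channelOutput (𝓘 i) x)).Nonempty :=
      ⟨x, Finset.mem_filter.2 ⟨(mem_listsLen n x).2 hx, rfl⟩⟩
    rw [hf]
    simp only [dif_pos hne]
    have h1 := Classical.choose_spec (Finset.exists_min_image
      (Sy (fun i => channelOutput (𝓘 i) x)) key hne)
    exact ⟨h1.1, h1.2⟩
  have houtf : ∀ y ∈ channelOutputs 𝓘 n, out (f y) = y := by
    intro y hy
    exact (Finset.mem_filter.1 (hspec y hy).1).2
  have hinj : Set.InjOn f (channelOutputs 𝓘 n) := by
    intro y hy y' hy' h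
    rw [← houtf y hy, ← houtf y' hy', h]
  have hmemred : ∀ y ∈ channelOutputs 𝓘 n,
      f y ∈ (listsLen q n).filter (ReducedP 𝓘 σ) := by
    intro y hy
    obtain ⟨hmem, hmin⟩ := hspec y hy
    have hlen : f y ∈ listsLen q n := (Finset.mem_filter.1 hmem).1
    refine Finset.mem_filter.2 ⟨hlen, ?_⟩
    rintro l1 a b l2 heq ⟨hcomm, hrk⟩
    set x' : List (Fin q) := l1 ++ b :: a :: l2 with hx'
    have hx'mem : x' ∈ Sy y := by
      refine Finset.mem_filter.2 ⟨?_, ?_⟩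
      · rw [mem_listsLen]
        have h1 : (f y).length = n := (mem_listsLen n (f y)).1 hlen
        rw [heq] at h1
        rw [hx']
        simpa using (by simpa using h1)
      · rw [← houtf y hy, hout]
        funext i
        show channelOutput (𝓘 i) x' = channelOutput (𝓘 i) (f y)
        rw [heq, hx']
        exact (swap_channelOutput (𝓘 i) a b (hcomm i) l1 l2).symm
    have hlt : key x' < key (f y) := by
      rw [heq, hx', hkey]
      simp only [List.map_append, List.map_cons]
      exact lex_lt_of_mid _ _ hrk _ _ _
    exact absurd (hmin x' hx'mem) (not_le.mpr hlt)
  calc (channelOutputs 𝓘 n).ncard = (f '' channelOutputs 𝓘 n).ncard :=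
        (Set.ncard_image_of_injOn hinj).symm
    _ ≤ (↑((listsLen q n).filter (ReducedP 𝓘 σ)) : Set (List (Fin q))).ncard := by
        apply Set.ncard_le_ncard _ (Set.toFinite _)
        rintro - ⟨y, hy, rfl⟩
        exact hmemred y hy
    _ = ((listsLen q n).filter (ReducedP 𝓘 σ)).card := Set.ncard_coe_finset _

end CapAux
end A6
section A7
namespace CapAux

variable {q : ℕ}

attribute [local instance 10] Classical.propDecidable

lemma sqrt3_sq : Real.sqrt 3 ^ 2 = 3 := Real.sq_sqrt (by norm_num)

lemma one_le_sqrt3 : (1:ℝ) ≤ Real.sqrt 3 := by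
  nlinarith [sqrt3_sq, Real.sqrt_nonneg 3]

lemma sqrt3_le_two : Real.sqrt 3 ≤ 2 := by
  nlinarith [sqrt3_sq, Real.sqrt_nonneg 3]

noncomputable def wtF (σ : Fin 4 → Fin q) (a : Fin q) : ℝ :=
  if a = σ 0 ∨ a = σ 1 then Real.sqrt 3 else if a = σ 2 ∨ a = σ 3 then 2 else 2^(4+a.val)

noncomputable def wtH (σ : Fin 4 → Fin q) : List (Fin q) → ℝ
  | [] => 1
  | a :: _ => wtF σ a

lemma one_le_pow_two (k : ℕ) : (1:ℝ) ≤ 2^k := one_le_pow₀ (by norm_num)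

lemma one_le_wtF (σ : Fin 4 → Fin q) (a : Fin q) : 1 ≤ wtF σ a := by
  rw [wtF]
  split_ifs
  · exact one_le_sqrt3
  · norm_num
  · exact one_le_pow_two _

lemma wtF_le (σ : Fin 4 → Fin q) (a : Fin q) : wtF σ a ≤ 2^(4+a.val) := by
  have h16 : (16:ℝ) ≤ 2^(4+a.val) := by
    calc (16:ℝ) = 2^4 := by norm_num
    _ ≤ 2^(4+a.val) := by
        apply pow_le_pow_right₀ (by norm_num) (by omega)
  rw [wtF]
  split_ifs
  · linarith [sqrt3_le_two]
  · linarith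
  · exact le_refl _

lemma one_le_wtH (σ : Fin 4 → Fin q) (x : List (Fin q)) : 1 ≤ wtH σ x := by
  cases x with
  | nil => exact le_refl 1
  | cons a w => exact one_le_wtF σ a

lemma wtF_s0 (σ : Fin 4 → Fin q) : wtF σ (σ 0) = Real.sqrt 3 := by simp [wtF]
lemma wtF_s1 (σ : Fin 4 → Fin q) : wtF σ (σ 1) = Real.sqrt 3 := by simp [wtF]
lemma wtF_s2 (σ : Fin 4 → Fin q) (hσ : Function.Injective σ) : wtF σ (σ 2) = 2 := by
  rw [wtF, if_neg, if_pos (Or.inl rfl)]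
  simp [hσ.eq_iff]
lemma wtF_s3 (σ : Fin 4 → Fin q) (hσ : Function.Injective σ) : wtF σ (σ 3) = 2 := by
  rw [wtF, if_neg, if_pos (Or.inr rfl)]
  simp [hσ.eq_iff]
lemma wtF_junk (σ : Fin 4 → Fin q) {a : Fin q} (ha : a ∉ Set.range σ) :
    wtF σ a = 2^(4+a.val) := by
  rw [wtF, if_neg, if_neg]
  · rintro (h | h) <;> exact ha ⟨_, h.symm⟩
  · rintro (h | h) <;> exact ha ⟨_, h.symm⟩

lemma rkF_s (σ : Fin 4 → Fin q) (hσ : Function.Injective σ) :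
    rkF σ (σ 0) = 0 ∧ rkF σ (σ 1) = 1 ∧ rkF σ (σ 2) = 2 ∧ rkF σ (σ 3) = 3 := by
  refine ⟨?_, ?_, ?_, ?_⟩ <;> simp [rkF, hσ.eq_iff]

lemma rkF_junk (σ : Fin 4 → Fin q) {a : Fin q} (ha : a ∉ Set.range σ) :
    rkF σ a = 4 + a.val := by
  rw [rkF, if_neg, if_neg, if_neg, if_neg] <;>
    first
      | (intro h; exact ha ⟨_, h.symm⟩)

lemma commP_junk_left (σ : Fin 4 → Fin q) (𝓘 : Fin 4 → Finset (Fin q))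
    (h𝓘 : ∀ i : Fin 4, 𝓘 i = {σ (i-1), σ i}) {a : Fin q} (ha : a ∉ Set.range σ)
    (b : Fin q) : commP 𝓘 a b := by
  intro i hi
  exact junk_not_mem (s := 3) σ 𝓘 h𝓘 ha i hi.1

lemma commP_junk_right (σ : Fin 4 → Fin q) (𝓘 : Fin 4 → Finset (Fin q))
    (h𝓘 : ∀ i : Fin 4, 𝓘 i = {σ (i-1), σ i}) {b : Fin q} (hb : b ∉ Set.range σ)
    (a : Fin q) : commP 𝓘 a b := by
  intro i hi
  exact junk_not_mem (s := 3) σ 𝓘 h𝓘 hb i hi.2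

lemma commP20 (σ : Fin 4 → Fin q) (hσ : Function.Injective σ)
    (𝓘 : Fin 4 → Finset (Fin q)) (h𝓘 : ∀ i : Fin 4, 𝓘 i = {σ (i-1), σ i}) :
    commP 𝓘 (σ 2) (σ 0) := by
  intro i hi
  obtain ⟨h2, h0⟩ := hi
  rw [mem_chan (s := 3) σ hσ 𝓘 h𝓘 2 i] at h2
  rw [mem_chan (s := 3) σ hσ 𝓘 h𝓘 0 i] at h0
  rcases h2 with rfl | rfl <;> revert h0 <;> decide

lemma commP31 (σ : Fin 4 → Fin q) (hσ : Function.Injective σ)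
    (𝓘 : Fin 4 → Finset (Fin q)) (h𝓘 : ∀ i : Fin 4, 𝓘 i = {σ (i-1), σ i}) :
    commP 𝓘 (σ 3) (σ 1) := by
  intro i hi
  obtain ⟨h2, h0⟩ := hi
  rw [mem_chan (s := 3) σ hσ 𝓘 h𝓘 3 i] at h2
  rw [mem_chan (s := 3) σ hσ 𝓘 h𝓘 1 i] at h0
  rcases h2 with rfl | rfl <;> revert h0 <;> decide

lemma sum_union_le_of_nonneg {α : Type*} [DecidableEq α] (s t : Finset α) (f : α → ℝ)
    (hf : ∀ a, 0 ≤ f a) : ∑ x ∈ s ∪ t, f x ≤ ∑ x ∈ s, f x + ∑ x ∈ t, f x := by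
  rw [← Finset.union_sdiff_self_eq_union, Finset.sum_union Finset.sdiff_disjoint.symm]
  apply add_le_add le_rfl
  exact Finset.sum_le_sum_of_subset_of_nonneg (Finset.sdiff_subset) (fun a _ _ => hf a)

end CapAux
end A7
section A8
namespace CapAux

variable {q : ℕ}

attribute [local instance 10] Classical.propDecidable

lemma fin4_cases (j : Fin 4) : j = 0 ∨ j = 1 ∨ j = 2 ∨ j = 3 := by revert j; decide

lemma wtF_nonneg (σ : Fin 4 → Fin q) (a : Fin q) : 0 ≤ wtF σ a :=
  le_trans (by norm_num) (one_le_wtF σ a)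

lemma sum_S4 (σ : Fin 4 → Fin q) (hσ : Function.Injective σ) :
    ∑ a ∈ ({σ 0, σ 1, σ 2, σ 3} : Finset (Fin q)), wtF σ a = 2 * Real.sqrt 3 + 4 := by
  rw [Finset.sum_insert (by simp [hσ.eq_iff]), Finset.sum_insert (by simp [hσ.eq_iff]),
    Finset.sum_insert (by simp [hσ.eq_iff]), Finset.sum_singleton,
    wtF_s0, wtF_s1, wtF_s2 σ hσ, wtF_s3 σ hσ]
  ring

lemma column_junk (σ : Fin 4 → Fin q) (hσ : Function.Injective σ)
    (𝓘 : Fin 4 → Finset (Fin q)) (h𝓘 : ∀ i : Fin 4, 𝓘 i = {σ (i-1), σ i})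
    {b : Fin q} (hb : b ∉ Set.range σ) :
    ∑ a ∈ Finset.univ.filter (fun a => ¬(commP 𝓘 a b ∧ rkF σ b < rkF σ a)), wtF σ a
      ≤ (2 + Real.sqrt 3) * wtF σ b := by
  have hwb : wtF σ b = 2^(4+b.val) := wtF_junk σ hb
  have hrb : rkF σ b = 4 + b.val := rkF_junk σ hb
  have hsub : Finset.univ.filter (fun a => ¬(commP 𝓘 a b ∧ rkF σ b < rkF σ a)) ⊆
      ({σ 0, σ 1, σ 2, σ 3} : Finset (Fin q)) ∪
        Finset.univ.filter (fun a : Fin q => a.val ≤ b.val) := by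
    intro a ha
    rw [Finset.mem_filter] at ha
    have hrk : rkF σ a ≤ rkF σ b := by
      by_contra hcon
      exact ha.2 ⟨commP_junk_right σ 𝓘 h𝓘 hb a, by omega⟩
    rw [Finset.mem_union]
    by_cases hra : a ∈ Set.range σ
    · obtain ⟨k, rfl⟩ := hra
      left
      rcases fin4_cases k with rfl | rfl | rfl | rfl <;> simp
    · right
      rw [Finset.mem_filter]
      refine ⟨Finset.mem_univ _, ?_⟩
      rw [rkF_junk σ hra, hrb] at hrk
      omega
  have hjunk : ∑ a ∈ Finset.univ.filter (fun a : Fin q => a.val ≤ b.val), wtF σ a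
      ≤ 2 * wtF σ b := by
    calc ∑ a ∈ Finset.univ.filter (fun a : Fin q => a.val ≤ b.val), wtF σ a
        ≤ ∑ a ∈ Finset.univ.filter (fun a : Fin q => a.val ≤ b.val), (2:ℝ)^(4+a.val) :=
          Finset.sum_le_sum (fun a _ => wtF_le σ a)
      _ = ∑ k ∈ (Finset.univ.filter (fun a : Fin q => a.val ≤ b.val)).image Fin.val,
            (2:ℝ)^(4+k) := by
          rw [Finset.sum_image (fun x _ y _ h => Fin.val_injective h)]
      _ ≤ ∑ k ∈ Finset.range (b.val+1), (2:ℝ)^(4+k) := by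
          apply Finset.sum_le_sum_of_subset_of_nonneg
          · intro k hk
            rw [Finset.mem_image] at hk
            obtain ⟨a, ha, rfl⟩ := hk
            rw [Finset.mem_filter] at ha
            rw [Finset.mem_range]
            omega
          · intro k _ _
            positivity
      _ = 16 * ∑ k ∈ Finset.range (b.val+1), (2:ℝ)^k := by
          rw [Finset.mul_sum]
          apply Finset.sum_congr rfl
          intro k _
          rw [pow_add]
          norm_num
      _ = 16 * (2^(b.val+1) - 1) := by
          rw [geom_sum_eq (by norm_num : (2:ℝ) ≠ 1)]
          norm_num
      _ ≤ 2 * wtF σ b := by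
          rw [hwb]
          have h1 : (2:ℝ)^(4+b.val) = 16 * 2^b.val := by rw [pow_add]; norm_num
          have h2 : (2:ℝ)^(b.val+1) = 2 * 2^b.val := by rw [pow_add]; ring
          rw [h1, h2]
          have : (0:ℝ) < 2^b.val := by positivity
          nlinarith
  have h16 : (16:ℝ) ≤ wtF σ b := by
    rw [hwb]
    calc (16:ℝ) = 2^4 := by norm_num
      _ ≤ 2^(4+b.val) := pow_le_pow_right₀ (by norm_num) (by omega)
  calc ∑ a ∈ Finset.univ.filter (fun a => ¬(commP 𝓘 a b ∧ rkF σ b < rkF σ a)), wtF σ a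
      ≤ ∑ a ∈ ({σ 0, σ 1, σ 2, σ 3} : Finset (Fin q)) ∪
          Finset.univ.filter (fun a : Fin q => a.val ≤ b.val), wtF σ a :=
        Finset.sum_le_sum_of_subset_of_nonneg hsub (fun a _ _ => wtF_nonneg σ a)
    _ ≤ (2 * Real.sqrt 3 + 4) + 2 * wtF σ b := by
        rw [← sum_S4 σ hσ]
        exact sum_union_le_of_nonneg _ _ _ (wtF_nonneg σ) |>.trans
          (by rw [sum_S4 σ hσ]; exact add_le_add le_rfl hjunk)
    _ ≤ (2 + Real.sqrt 3) * wtF σ b := by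
        nlinarith [one_le_sqrt3, sqrt3_le_two]

end CapAux
end A8
section A9
namespace CapAux

variable {q : ℕ}

attribute [local instance 10] Classical.propDecidable

lemma column_bound (σ : Fin 4 → Fin q) (hσ : Function.Injective σ)
    (𝓘 : Fin 4 → Finset (Fin q)) (h𝓘 : ∀ i : Fin 4, 𝓘 i = {σ (i-1), σ i})
    (b : Fin q) :
    ∑ a ∈ Finset.univ.filter (fun a => ¬(commP 𝓘 a b ∧ rkF σ b < rkF σ a)), wtF σ a
      ≤ (2 + Real.sqrt 3) * wtF σ b := by
  obtain ⟨hr0, hr1, hr2, hr3⟩ := rkF_s σ hσ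
  by_cases hb : b ∈ Set.range σ
  · obtain ⟨j, rfl⟩ := hb
    have hjunkcase : ∀ a : Fin q, a ∉ Set.range σ → rkF σ (σ j) < rkF σ a := by
      intro a ha
      rw [rkF_junk σ ha]
      rcases fin4_cases j with rfl | rfl | rfl | rfl <;> omega
    rcases fin4_cases j with rfl | rfl | rfl | rfl
    · -- b = σ 0 : allowed ⊆ {σ 0, σ 1, σ 3}
      have hsub : Finset.univ.filter
          (fun a => ¬(commP 𝓘 a (σ 0) ∧ rkF σ (σ 0) < rkF σ a)) ⊆
          ({σ 0, σ 1, σ 3} : Finset (Fin q)) := by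
        intro a ha
        rw [Finset.mem_filter] at ha
        by_cases hra : a ∈ Set.range σ
        · obtain ⟨k, rfl⟩ := hra
          rcases fin4_cases k with rfl | rfl | rfl | rfl
          · simp
          · simp
          · exact absurd ⟨commP20 σ hσ 𝓘 h𝓘, by omega⟩ ha.2
          · simp
        · exact absurd ⟨commP_junk_left σ 𝓘 h𝓘 hra _, hjunkcase a hra⟩ ha.2
      calc _ ≤ ∑ a ∈ ({σ 0, σ 1, σ 3} : Finset (Fin q)), wtF σ a :=
            Finset.sum_le_sum_of_subset_of_nonneg hsub (fun a _ _ => wtF_nonneg σ a)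
        _ = Real.sqrt 3 + Real.sqrt 3 + 2 := by
            rw [Finset.sum_insert (by simp [hσ.eq_iff]),
              Finset.sum_insert (by simp [hσ.eq_iff]), Finset.sum_singleton,
              wtF_s0, wtF_s1, wtF_s3 σ hσ]
            ring
        _ ≤ (2 + Real.sqrt 3) * wtF σ (σ 0) := by
            rw [wtF_s0]
            nlinarith [sqrt3_sq, one_le_sqrt3]
    · -- b = σ 1 : allowed ⊆ {σ 0, σ 1, σ 2}
      have hsub : Finset.univ.filter
          (fun a => ¬(commP 𝓘 a (σ 1) ∧ rkF σ (σ 1) < rkF σ a)) ⊆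
          ({σ 0, σ 1, σ 2} : Finset (Fin q)) := by
        intro a ha
        rw [Finset.mem_filter] at ha
        by_cases hra : a ∈ Set.range σ
        · obtain ⟨k, rfl⟩ := hra
          rcases fin4_cases k with rfl | rfl | rfl | rfl
          · simp
          · simp
          · simp
          · exact absurd ⟨commP31 σ hσ 𝓘 h𝓘, by omega⟩ ha.2
        · exact absurd ⟨commP_junk_left σ 𝓘 h𝓘 hra _, hjunkcase a hra⟩ ha.2
      calc _ ≤ ∑ a ∈ ({σ 0, σ 1, σ 2} : Finset (Fin q)), wtF σ a :=
            Finset.sum_le_sum_of_subset_of_nonneg hsub (fun a _ _ => wtF_nonneg σ a)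
        _ = Real.sqrt 3 + Real.sqrt 3 + 2 := by
            rw [Finset.sum_insert (by simp [hσ.eq_iff]),
              Finset.sum_insert (by simp [hσ.eq_iff]), Finset.sum_singleton,
              wtF_s0, wtF_s1, wtF_s2 σ hσ]
            ring
        _ ≤ (2 + Real.sqrt 3) * wtF σ (σ 1) := by
            rw [wtF_s1]
            nlinarith [sqrt3_sq, one_le_sqrt3]
    · -- b = σ 2
      have hsub : Finset.univ.filter
          (fun a => ¬(commP 𝓘 a (σ 2) ∧ rkF σ (σ 2) < rkF σ a)) ⊆
          ({σ 0, σ 1, σ 2, σ 3} : Finset (Fin q)) := by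
        intro a ha
        rw [Finset.mem_filter] at ha
        by_cases hra : a ∈ Set.range σ
        · obtain ⟨k, rfl⟩ := hra
          rcases fin4_cases k with rfl | rfl | rfl | rfl <;> simp
        · exact absurd ⟨commP_junk_left σ 𝓘 h𝓘 hra _, hjunkcase a hra⟩ ha.2
      calc _ ≤ ∑ a ∈ ({σ 0, σ 1, σ 2, σ 3} : Finset (Fin q)), wtF σ a :=
            Finset.sum_le_sum_of_subset_of_nonneg hsub (fun a _ _ => wtF_nonneg σ a)
        _ = 2 * Real.sqrt 3 + 4 := sum_S4 σ hσ
        _ ≤ (2 + Real.sqrt 3) * wtF σ (σ 2) := by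
            rw [wtF_s2 σ hσ]
            nlinarith [one_le_sqrt3]
    · -- b = σ 3
      have hsub : Finset.univ.filter
          (fun a => ¬(commP 𝓘 a (σ 3) ∧ rkF σ (σ 3) < rkF σ a)) ⊆
          ({σ 0, σ 1, σ 2, σ 3} : Finset (Fin q)) := by
        intro a ha
        rw [Finset.mem_filter] at ha
        by_cases hra : a ∈ Set.range σ
        · obtain ⟨k, rfl⟩ := hra
          rcases fin4_cases k with rfl | rfl | rfl | rfl <;> simp
        · exact absurd ⟨commP_junk_left σ 𝓘 h𝓘 hra _, hjunkcase a hra⟩ ha.2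
      calc _ ≤ ∑ a ∈ ({σ 0, σ 1, σ 2, σ 3} : Finset (Fin q)), wtF σ a :=
            Finset.sum_le_sum_of_subset_of_nonneg hsub (fun a _ _ => wtF_nonneg σ a)
        _ = 2 * Real.sqrt 3 + 4 := sum_S4 σ hσ
        _ ≤ (2 + Real.sqrt 3) * wtF σ (σ 3) := by
            rw [wtF_s3 σ hσ]
            nlinarith [one_le_sqrt3]
  · exact column_junk σ hσ 𝓘 h𝓘 hb

end CapAux
end A9
section A10
namespace CapAux

variable {q : ℕ}

attribute [local instance 10] Classical.propDecidable

lemma R_succ_eq (σ : Fin 4 → Fin q) (𝓘 : Fin 4 → Finset (Fin q)) (n : ℕ) :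
    (listsLen q (n+1)).filter (ReducedP 𝓘 σ) =
      ((Finset.univ ×ˢ (listsLen q n).filter (ReducedP 𝓘 σ)).filter
        (fun p => ReducedP 𝓘 σ (p.1 :: p.2))).image (fun p => p.1 :: p.2) := by
  ext x
  constructor
  · intro hx
    rw [Finset.mem_filter, mem_listsLen] at hx
    obtain ⟨hlen, hred⟩ := hx
    cases x with
    | nil => simp at hlen
    | cons a w =>
      apply Finset.mem_image.2
      refine ⟨(a, w), Finset.mem_filter.2 ⟨Finset.mem_product.2 ⟨Finset.mem_univ _, ?_⟩, hred⟩, rfl⟩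
      rw [Finset.mem_filter, mem_listsLen]
      exact ⟨by simpa using hlen, reduced_tail 𝓘 σ a w hred⟩
  · intro hx
    obtain ⟨p, hp, rfl⟩ := Finset.mem_image.1 hx
    rw [Finset.mem_filter] at hp
    obtain ⟨hp1, hp2⟩ := hp
    rw [Finset.mem_product] at hp1
    have hw := hp1.2
    rw [Finset.mem_filter, mem_listsLen] at hw
    rw [Finset.mem_filter, mem_listsLen]
    exact ⟨by simpa using hw.1, hp2⟩

lemma S_step (σ : Fin 4 → Fin q) (hσ : Function.Injective σ)
    (𝓘 : Fin 4 → Finset (Fin q)) (h𝓘 : ∀ i : Fin 4, 𝓘 i = {σ (i-1), σ i})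
    (n : ℕ) (hn : 1 ≤ n) :
    ∑ x ∈ (listsLen q (n+1)).filter (ReducedP 𝓘 σ), wtH σ x
      ≤ (2 + Real.sqrt 3) * ∑ x ∈ (listsLen q n).filter (ReducedP 𝓘 σ), wtH σ x := by
  rw [R_succ_eq σ 𝓘 n]
  rw [Finset.sum_image (by
    intro p _ p' _ h
    injection h with h1 h2
    exact Prod.ext h1 h2)]
  have hwtH : ∀ p : Fin q × List (Fin q), wtH σ (p.1 :: p.2) = wtF σ p.1 := fun p => rfl
  calc ∑ p ∈ (Finset.univ ×ˢ (listsLen q n).filter (ReducedP 𝓘 σ)).filter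
          (fun p => ReducedP 𝓘 σ (p.1 :: p.2)), wtH σ (p.1 :: p.2)
      = ∑ p ∈ Finset.univ ×ˢ (listsLen q n).filter (ReducedP 𝓘 σ),
          if ReducedP 𝓘 σ (p.1 :: p.2) then wtF σ p.1 else 0 := by
        rw [Finset.sum_filter]
        apply Finset.sum_congr rfl
        intro p _
        rw [hwtH]
    _ = ∑ w ∈ (listsLen q n).filter (ReducedP 𝓘 σ), ∑ a : Fin q,
          if ReducedP 𝓘 σ (a :: w) then wtF σ a else 0 :=
        Finset.sum_product_right' _ _
          (fun a w => if ReducedP 𝓘 σ (a :: w) then wtF σ a else 0)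
    _ ≤ ∑ w ∈ (listsLen q n).filter (ReducedP 𝓘 σ), (2 + Real.sqrt 3) * wtH σ w := by
        apply Finset.sum_le_sum
        intro w hw
        rw [Finset.mem_filter, mem_listsLen] at hw
        obtain ⟨hlen, hred⟩ := hw
        cases w with
        | nil => simp at hlen; omega
        | cons b w' =>
          calc ∑ a : Fin q, (if ReducedP 𝓘 σ (a :: b :: w') then wtF σ a else 0)
              = ∑ a ∈ Finset.univ.filter (fun a => ReducedP 𝓘 σ (a :: b :: w')),
                  wtF σ a := (Finset.sum_filter _ _).symm
            _ ≤ ∑ a ∈ Finset.univ.filter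
                  (fun a => ¬(commP 𝓘 a b ∧ rkF σ b < rkF σ a)), wtF σ a := by
                apply Finset.sum_le_sum_of_subset_of_nonneg
                · intro a ha
                  rw [Finset.mem_filter] at ha ⊢
                  exact ⟨Finset.mem_univ _, ha.2 [] a b w' rfl⟩
                · intro a _ _
                  exact wtF_nonneg σ a
            _ ≤ (2 + Real.sqrt 3) * wtF σ b := column_bound σ hσ 𝓘 h𝓘 b
            _ = (2 + Real.sqrt 3) * wtH σ (b :: w') := rfl
    _ = (2 + Real.sqrt 3) * ∑ w ∈ (listsLen q n).filter (ReducedP 𝓘 σ), wtH σ w :=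
        (Finset.mul_sum _ _ _).symm

lemma S_one_le (hq : 2 ≤ q) (σ : Fin 4 → Fin q) (𝓘 : Fin 4 → Finset (Fin q)) :
    ∑ x ∈ (listsLen q 1).filter (ReducedP 𝓘 σ), wtH σ x ≤ (q : ℝ) * 2^(q+4) := by
  have h1 : ∑ x ∈ (listsLen q 1).filter (ReducedP 𝓘 σ), wtH σ x
      ≤ ∑ x ∈ listsLen q 1, wtH σ x :=
    Finset.sum_le_sum_of_subset_of_nonneg (Finset.filter_subset _ _)
      (fun x _ _ => le_trans (by norm_num) (one_le_wtH σ x))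
  have h2 : listsLen q 1 = Finset.univ.image (fun a : Fin q => [a]) := by
    ext x
    rw [mem_listsLen]
    constructor
    · intro hx
      cases x with
      | nil => simp at hx
      | cons a w =>
        have : w = [] := by
          cases w with
          | nil => rfl
          | cons b u => simp at hx
        subst this
        exact Finset.mem_image.2 ⟨a, Finset.mem_univ _, rfl⟩
    · intro hx
      obtain ⟨a, _, rfl⟩ := Finset.mem_image.1 hx
      rfl
  have h3 : ∑ x ∈ listsLen q 1, wtH σ x = ∑ a : Fin q, wtF σ a := by
    rw [h2, Finset.sum_image (by intro a _ b _ h; injection h)]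
    rfl
  have h4 : ∑ a : Fin q, wtF σ a ≤ ∑ _a : Fin q, (2:ℝ)^(q+3) := by
    apply Finset.sum_le_sum
    intro a _
    calc wtF σ a ≤ 2^(4+a.val) := wtF_le σ a
      _ ≤ (2:ℝ)^(q+3) := pow_le_pow_right₀ (by norm_num) (by omega)
  have h5 : ∑ _a : Fin q, (2:ℝ)^(q+3) = (q : ℝ) * 2^(q+3) := by
    rw [Finset.sum_const, Finset.card_univ, Fintype.card_fin, nsmul_eq_mul]
  calc ∑ x ∈ (listsLen q 1).filter (ReducedP 𝓘 σ), wtH σ x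
      ≤ (q : ℝ) * 2^(q+3) := by linarith
    _ ≤ (q : ℝ) * 2^(q+4) := by
        apply mul_le_mul_of_nonneg_left _ (Nat.cast_nonneg q)
        apply pow_le_pow_right₀ (by norm_num) (by omega)

lemma part2_count (hq : 2 ≤ q) (σ : Fin 4 → Fin q) (hσ : Function.Injective σ)
    (𝓘 : Fin 4 → Finset (Fin q)) (h𝓘 : ∀ i : Fin 4, 𝓘 i = {σ (i-1), σ i})
    (n : ℕ) (hn : 1 ≤ n) :
    ((channelOutputs 𝓘 n).ncard : ℝ) ≤ ((q : ℝ) * 2^(q+4)) * (2 + Real.sqrt 3)^n := by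
  have hlam1 : (1:ℝ) ≤ 2 + Real.sqrt 3 := by linarith [Real.sqrt_nonneg 3]
  have hlam0 : (0:ℝ) ≤ 2 + Real.sqrt 3 := by linarith
  have hS : ∀ m, 1 ≤ m → ∑ x ∈ (listsLen q m).filter (ReducedP 𝓘 σ), wtH σ x
      ≤ ((q : ℝ) * 2^(q+4)) * (2 + Real.sqrt 3)^(m-1) := by
    intro m hm
    induction m, hm using Nat.le_induction with
    | base => simpa using S_one_le hq σ 𝓘
    | succ m hm ih =>
      calc ∑ x ∈ (listsLen q (m+1)).filter (ReducedP 𝓘 σ), wtH σ x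
          ≤ (2 + Real.sqrt 3) * ∑ x ∈ (listsLen q m).filter (ReducedP 𝓘 σ), wtH σ x :=
            S_step σ hσ 𝓘 h𝓘 m hm
        _ ≤ (2 + Real.sqrt 3) * (((q : ℝ) * 2^(q+4)) * (2 + Real.sqrt 3)^(m-1)) :=
            mul_le_mul_of_nonneg_left ih hlam0
        _ = ((q : ℝ) * 2^(q+4)) * (2 + Real.sqrt 3)^(m+1-1) := by
            rw [show m+1-1 = (m-1)+1 by omega, pow_succ]
            ring
  have hcard : ((channelOutputs 𝓘 n).ncard : ℝ)
      ≤ (((listsLen q n).filter (ReducedP 𝓘 σ)).card : ℝ) := by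
    exact_mod_cast ncard_le_card_reduced 𝓘 σ n
  have hcardS : (((listsLen q n).filter (ReducedP 𝓘 σ)).card : ℝ)
      ≤ ∑ x ∈ (listsLen q n).filter (ReducedP 𝓘 σ), wtH σ x := by
    have := Finset.card_nsmul_le_sum ((listsLen q n).filter (ReducedP 𝓘 σ))
      (wtH σ) 1 (fun x _ => one_le_wtH σ x)
    simpa using this
  calc ((channelOutputs 𝓘 n).ncard : ℝ)
      ≤ ((q : ℝ) * 2^(q+4)) * (2 + Real.sqrt 3)^(n-1) :=
        hcard.trans (hcardS.trans (hS n hn))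
    _ ≤ ((q : ℝ) * 2^(q+4)) * (2 + Real.sqrt 3)^n := by
        apply mul_le_mul_of_nonneg_left _ (by positivity)
        exact pow_le_pow_right₀ hlam1 (by omega)

end CapAux
end A10
section A11
namespace CapAux

lemma sqrt3_gt_one : (1:ℝ) < Real.sqrt 3 := by
  nlinarith [sqrt3_sq, Real.sqrt_nonneg 3]

lemma logb_identity :
    Real.logb 2 (2 + Real.sqrt 3) =
      1 / Real.sqrt 3 + (1 + 1 / Real.sqrt 3) * binH (2 - Real.sqrt 3) := by
  set t := Real.sqrt 3 with hts
  have ht2 : t^2 = 3 := sqrt3_sq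
  have ht1 : (1:ℝ) < t := sqrt3_gt_one
  have ht0 : (0:ℝ) < t := by linarith
  set L := Real.logb 2 (2 + t) with hL
  have hpos : (0:ℝ) < 2 + t := by linarith
  have hinv : 2 - t = (2 + t)⁻¹ := by
    apply eq_inv_of_mul_eq_one_left
    nlinarith
  have h1 : Real.logb 2 (2 - t) = -L := by rw [hinv, Real.logb_inv]
  have hm1 : (1:ℝ) - (2 - t) = t - 1 := by ring
  have h2 : Real.logb 2 (t - 1) = (1 - L)/2 := by
    have hsq : (t - 1)^2 = 2 * (2 + t)⁻¹ := by
      rw [← hinv]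
      linear_combination ht2
    have hc := congrArg (Real.logb 2) hsq
    rw [Real.logb_pow, Real.logb_mul (by norm_num) (by positivity),
      Real.logb_inv, Real.logb_self_eq_one (by norm_num)] at hc
    rw [← hL] at hc
    push_cast at hc
    linarith
  rw [binH, h1, hm1, h2]
  field_simp
  linear_combination (L+1) * ht2

end CapAux
end A11

open CapAux

/-- bounds on the capacity of a cycle of length `t = s+1 ≥ 4`:
the capacity of a path of length `t−1` is a lower bound, and the stated upper
bounds hold for `t = 4` and `t ≥ 5`. -/
theorem capacity_of_cycle_bounds (q s : ℕ) (hq : 2 ≤ q) (ht : 4 ≤ s + 1)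
    (σ : Fin (s + 1) → Fin q) (hσ : Function.Injective σ)
    (𝓘 : Fin (s + 1) → Finset (Fin q))
    (h𝓘 : ∀ i : Fin (s + 1), 𝓘 i = {σ (i - 1), σ i})
    (τ : Fin (s + 1) → Fin q) (hτ : Function.Injective τ)
    (𝓙 : Fin s → Finset (Fin q))
    (h𝓙 : ∀ i : Fin s, 𝓙 i = {τ i.castSucc, τ i.succ}) :
    capacity 𝓙 ≤ capacity 𝓘 ∧
    (s + 1 = 4 → capacity 𝓘 ≤
      (1 / Real.sqrt 3 + (1 + 1 / Real.sqrt 3) * binH (2 - Real.sqrt 3)) *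
        Real.logb q 2) ∧
    (5 ≤ s + 1 → capacity 𝓘 ≤ Real.logb q 4) := by
  refine ⟨?_, ?_, ?_⟩
  · -- the path of length s is at most the cycle
    obtain ⟨e, he⟩ := exists_perm_comp τ σ hτ hσ
    apply capacity_mono hq 𝓘 𝓙
    intro n
    apply ncard_le_of_perm 𝓘 𝓙 (fun j => j.succ) e
    intro j a
    have hsub : (j.succ : Fin (s+1)) - 1 = j.castSucc := by
      rw [sub_eq_iff_eq_add]
      exact (Fin.coeSucc_eq_succ).symm
    rw [h𝓙 j, h𝓘 j.succ, hsub, Finset.mem_insert, Finset.mem_singleton,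
      Finset.mem_insert, Finset.mem_singleton]
    constructor
    · rintro (rfl | rfl)
      · left; exact he _
      · right; exact he _
    · rintro (h | h)
      · left; exact e.injective (by rw [he]; exact h)
      · right; exact e.injective (by rw [he]; exact h)
  · -- t = 4
    intro h4
    have hs3 : s = 3 := by omega
    subst hs3
    have hcap : capacity 𝓘 ≤ Real.logb q (2 + Real.sqrt 3) := by
      apply capacity_le_of_bound hq 𝓘 ((q:ℝ) * 2^(q+4)) (2 + Real.sqrt 3) 0
      · have h2q : (2:ℝ) ≤ (q:ℝ) := by exact_mod_cast hq
        have hp : (1:ℝ) ≤ 2^(q+4) := one_le_pow_two _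
        nlinarith
      · linarith [Real.sqrt_nonneg 3]
      · intro n hn
        rw [pow_zero, mul_one]
        exact part2_count hq σ hσ 𝓘 h𝓘 n hn
    have hlq : Real.log 2 ≠ 0 := ne_of_gt (Real.log_pos (by norm_num))
    have hid : Real.logb q (2 + Real.sqrt 3) =
        (1 / Real.sqrt 3 + (1 + 1 / Real.sqrt 3) * binH (2 - Real.sqrt 3)) *
          Real.logb q 2 := by
      rw [← logb_identity, Real.logb, Real.logb, Real.logb]
      field_simp
    rw [hid] at hcap
    exact hcap
  · -- t ≥ 5
    intro _
    apply capacity_le_of_bound hq 𝓘 ((2:ℝ)^(s+1)) 4 (s+1)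
    · exact one_le_pow_two _
    · norm_num
    · intro n hn
      have hreal : ((channelOutputs 𝓘 n).ncard : ℝ) ≤
          ((2*n+2 : ℕ):ℝ)^(s+1) * (2:ℝ)^(2*n) := by
        exact_mod_cast part3_count n σ hσ 𝓘 h𝓘
      calc ((channelOutputs 𝓘 n).ncard : ℝ)
          ≤ ((2*n+2 : ℕ):ℝ)^(s+1) * (2:ℝ)^(2*n) := hreal
        _ ≤ (2:ℝ)^(s+1) * ((n:ℝ)+2)^(s+1) * 4^n := by
            have h1 : ((2*n+2 : ℕ):ℝ) = 2*((n:ℝ)+1) := by push_cast; ring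
            have h2 : (2:ℝ)^(2*n) = 4^n := by rw [pow_mul]; norm_num
            rw [h1, h2, mul_pow]
            apply mul_le_mul_of_nonneg_right _ (by positivity)
            apply mul_le_mul_of_nonneg_left _ (by positivity)
            apply pow_le_pow_left₀ (by positivity) (by linarith)
end

section
/- The function f(t) = t·H(1/t) − log₂ t is strictly increasing on the real interval (1, ∞), and lim_{t→∞} f(t) = log₂ e. -/
section
open Real Filter


private lemma eqOn_key : Set.EqOn (fun t : ℝ => t * binH (1 / t) - Real.logb 2 t)
    (fun t : ℝ => (t - 1) * (Real.log t - Real.log (t - 1)) / Real.log 2) (Set.Ioi 1) := by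
  intro t ht
  have ht1 : (1:ℝ) < t := ht
  have ht0 : (0:ℝ) < t := by linarith
  have htm : (0:ℝ) < t - 1 := by linarith
  have h1 : (1:ℝ) - t⁻¹ = (t-1)/t := by field_simp
  have hl2 : Real.log 2 ≠ 0 := by positivity
  simp only [binH, Real.logb, h1, one_div, Real.log_inv,
    Real.log_div htm.ne' ht0.ne']
  field_simp
  ring

private lemma hasDeriv_key {t : ℝ} (ht : t ∈ Set.Ioi (1:ℝ)) :
    HasDerivAt (fun t : ℝ => (t - 1) * (Real.log t - Real.log (t - 1)) / Real.log 2)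
      ((Real.log t - Real.log (t - 1) - 1/t) / Real.log 2) t := by
  have ht1 : (1:ℝ) < t := ht
  have ht0 : (0:ℝ) < t := by linarith
  have htm : (0:ℝ) < t - 1 := by linarith
  have h1 : HasDerivAt (fun t : ℝ => t - 1) 1 t := (hasDerivAt_id t).sub_const 1
  have h2 : HasDerivAt Real.log t⁻¹ t := Real.hasDerivAt_log ht0.ne'
  have h3 : HasDerivAt (fun t : ℝ => Real.log (t - 1)) (1 / (t - 1)) t := h1.log htm.ne'
  have := ((h1.mul (h2.sub h3)).div_const (Real.log 2))
  convert this using 1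
  · rfl
  · rfl
  · rfl
  simp only [Pi.sub_apply]
  field_simp
  ring

private lemma mono_key : StrictMonoOn
    (fun t : ℝ => (t - 1) * (Real.log t - Real.log (t - 1)) / Real.log 2) (Set.Ioi (1:ℝ)) := by
  apply strictMonoOn_of_deriv_pos (convex_Ioi 1)
  · exact fun x hx => (hasDeriv_key hx).continuousAt.continuousWithinAt
  · intro t ht
    rw [interior_Ioi] at ht
    have ht1 : (1:ℝ) < t := ht
    have ht0 : (0:ℝ) < t := by linarith
    have htm : (0:ℝ) < t - 1 := by linarith
    rw [(hasDeriv_key ht).deriv]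
    have hx : Real.log ((t-1)/t) < (t-1)/t - 1 := by
      apply Real.log_lt_sub_one_of_pos (by positivity)
      exact ne_of_lt ((div_lt_one ht0).mpr (by linarith))
    rw [Real.log_div htm.ne' ht0.ne'] at hx
    have h2 : (t-1)/t - 1 = -(1/t) := by field_simp; ring
    have : Real.log t - Real.log (t-1) - 1/t > 0 := by
      rw [h2] at hx; linarith
    have hl2 : (0:ℝ) < Real.log 2 := by positivity
    positivity

private lemma tendsto_key : Filter.Tendsto
    (fun t : ℝ => (t - 1) * (Real.log t - Real.log (t - 1)) / Real.log 2) Filter.atTop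
    (nhds (Real.logb 2 (Real.exp 1))) := by
  have h0 : Tendsto (fun s : ℝ => s * Real.log (1 + 1/s)) atTop (nhds 1) := by
    simpa using Real.tendsto_mul_log_one_add_div_atTop 1
  have h1 : Tendsto (fun t : ℝ => t - 1) atTop atTop := tendsto_atTop_add_const_right _ _ tendsto_id
  have h2 := (h0.comp h1).div_const (Real.log 2)
  have h3 : Real.logb 2 (Real.exp 1) = 1 / Real.log 2 := by
    simp [Real.logb, Real.log_exp]
  rw [h3]
  apply h2.congr'
  filter_upwards [Filter.eventually_gt_atTop (1:ℝ)] with t ht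
  have ht0 : (0:ℝ) < t := by linarith
  have htm : (0:ℝ) < t - 1 := by linarith
  have : 1 + 1/(t-1) = t/(t-1) := by field_simp; ring
  simp only [Function.comp, this, Real.log_div ht0.ne' htm.ne']

end

/-- `t ↦ t·H(1/t) − log₂ t` is strictly increasing on `(1,∞)` and
tends to `log₂ e` at infinity. -/
theorem tH_sub_log_strictMono_tendsto :
    StrictMonoOn (fun t : ℝ => t * binH (1 / t) - Real.logb 2 t) (Set.Ioi (1 : ℝ)) ∧
    Filter.Tendsto (fun t : ℝ => t * binH (1 / t) - Real.logb 2 t) Filter.atTop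
      (nhds (Real.logb 2 (Real.exp 1))) := by
  constructor
  · exact mono_key.congr eqOn_key.symm
  · apply tendsto_key.congr'
    filter_upwards [Filter.eventually_gt_atTop (1:ℝ)] with t ht
    exact (eqOn_key ht).symm
end
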